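/- arXiv:2511.03461 — 7 statements merged into one kernel-verified Lean document; each statement's English description precedes it below -/
import Mathlib

section
/- Let G be a hypergraph, let A ⊆ E(G) be a well-linked set of hyperedges, and let B ⊆ E(G) be arbitrary. Then λ(B ∪ A) ≤ λ(B) or λ(B \ A) ≤ λ(B). -/
open scoped Classical

namespace Paper

variable {V : Type} {E : Type}

/-- Vertices covered by a set of hyperedges. -/
noncomputable def Vs (F : E → Finset V) (A : Finset E) : Finset V := A.biUnion F

/-- Boundary of `A` relative to a ground set of hyperedges. -/
noncomputable def bdIn (F : E → Finset V) (ground A : Finset E) : Finset V :=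
  Vs F A ∩ Vs F (ground \ A)

/-- Boundary size. -/
noncomputable def lamIn (F : E → Finset V) (ground A : Finset E) : ℕ :=
  (bdIn F ground A).card

/-- Interior. -/
noncomputable def intIn (F : E → Finset V) (ground A : Finset E) : Finset V :=
  Vs F A \ bdIn F ground A

/-- A set of hyperedges is well-linked. -/
def WellLinkedIn (F : E → Finset V) (ground A : Finset E) : Prop :=
  ∀ A1 A2 : Finset E, A1 ∪ A2 = A → A1 ∩ A2 = ∅ →
    lamIn F ground A ≤ lamIn F ground A1 ∨ lamIn F ground A ≤ lamIn F ground A2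

/-- A nonempty set of hyperedges is internally connected. -/
def InternallyConnectedIn (F : E → Finset V) (ground A : Finset E) : Prop :=
  A.Nonempty ∧ ¬ ∃ B1 B2 : Finset E, B1 ∪ B2 = A ∧ B1 ∩ B2 = ∅ ∧
    B1.Nonempty ∧ B2.Nonempty ∧
    bdIn F ground B1 ⊆ bdIn F ground A ∧ bdIn F ground B2 ⊆ bdIn F ground A

/-- Internal component: an inclusion-maximal internally connected subset. -/
def InternalComponentIn (F : E → Finset V) (ground B B' : Finset E) : Prop :=
  B' ⊆ B ∧ InternallyConnectedIn F ground B' ∧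
    ∀ B'' : Finset E, B' ⊆ B'' → B'' ⊆ B → InternallyConnectedIn F ground B'' → B'' = B'

/-- A tree decomposition of the graph with adjacency `Adj` induced on vertex set `s`. -/
structure TreeDecompOn (Adj : V → V → Prop) (s : Finset V) where
  ι : Type
  fin : Fintype ι
  tr : SimpleGraph ι
  isTree : tr.IsTree
  bag : ι → Finset V
  bag_sub : ∀ i, bag i ⊆ s
  cover_v : ∀ v ∈ s, ∃ i, v ∈ bag i
  cover_e : ∀ u ∈ s, ∀ v ∈ s, Adj u v → ∃ i, u ∈ bag i ∧ v ∈ bag i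
  conn : ∀ v ∈ s, (tr.induce {i | v ∈ bag i}).Connected

/-- Treewidth (an integer, `-1` for the empty graph) of the graph
with adjacency `Adj` induced on the vertex set `s`. -/
noncomputable def tw (Adj : V → V → Prop) (s : Finset V) : ℤ :=
  sInf {k : ℤ | ∃ D : TreeDecompOn Adj s, ∀ i, ((D.bag i).card : ℤ) ≤ k + 1}

/-- Minimum size of a treewidth-`η`-modulator of the graph induced on `s`. -/
noncomputable def twmodOn (Adj : V → V → Prop) (s : Finset V) (η : ℕ) : ℕ :=
  sInf {n : ℕ | ∃ X : Finset V, X ⊆ s ∧ X.card ≤ n ∧ tw Adj (s \ X) ≤ (η : ℤ)}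

/-- Adjacency of the primal graph of a hypergraph. -/
def primalAdj (F : E → Finset V) : V → V → Prop :=
  fun u v => u ≠ v ∧ ∃ e : E, u ∈ F e ∧ v ∈ F e

/-- Internal treewidth of a set of hyperedges. -/
noncomputable def itw [Fintype E] (F : E → Finset V) (A : Finset E) : ℤ :=
  tw (primalAdj F) (intIn F Finset.univ A)

/-- The hypergraph given by `F` is (isomorphic to) the support hypergraph of `G`:
it has exactly one hyperedge `{v}` for each vertex `v` and exactly one hyperedge
`{u, v}` for each edge `uv`, and no other hyperedges. -/
def IsSupport (G : SimpleGraph V) (F : E → Finset V) : Prop :=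
  (∀ e : E, (∃ v : V, F e = {v}) ∨ (∃ u v : V, G.Adj u v ∧ F e = {u, v})) ∧
  (∀ v : V, ∃! e : E, F e = {v}) ∧
  (∀ u v : V, G.Adj u v → ∃! e : E, F e = ({u, v} : Finset V))

/-- `H` is a topological minor of `G` using only vertices in `s`. -/
def IsTopMinorOn {α β : Type} (H : SimpleGraph α) (G : SimpleGraph β) (s : Set β) : Prop :=
  ∃ φ : α → β, (∀ a, φ a ∈ s) ∧ Function.Injective φ ∧
    ∃ P : ∀ u v : α, H.Adj u v → G.Walk (φ u) (φ v),
      (∀ u v (h : H.Adj u v), (P u v h).IsPath) ∧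
      (∀ u v (h : H.Adj u v), ∀ w ∈ (P u v h).support, w ∈ s) ∧
      (∀ u v (h : H.Adj u v) (w : β), w ∈ (P u v h).support → w ≠ φ u → w ≠ φ v →
        ∀ a : α, φ a ≠ w) ∧
      (∀ u v u' v' (h : H.Adj u v) (h' : H.Adj u' v'),
        (s(u, v) : Sym2 α) ≠ s(u', v') →
        ∀ w : β, w ∈ (P u v h).support → w ∈ (P u' v' h').support → w = φ u ∨ w = φ v)

/-- `H` is a topological minor of `G`. -/
def IsTopMinor {α β : Type} (H : SimpleGraph α) (G : SimpleGraph β) : Prop :=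
  IsTopMinorOn H G Set.univ

/-- A rooted superbranch decomposition of a hypergraph with hyperedge type `E`:
a finite rooted tree (given by a parent map) whose leaves are in bijection with `E`
and in which every non-leaf node has at least two children. -/
structure SBD (E : Type) [Fintype E] where
  ι : Type
  fin : Fintype ι
  root : ι
  par : ι → ι
  par_root : par root = root
  reach : ∀ i : ι, ∃ n : ℕ, par^[n] i = root
  leafMap : E → ι
  inj : Function.Injective leafMap
  map_leaf : ∀ (e : E) (j : ι), par j = leafMap e → j = leafMap e
  leaf_surj : ∀ i : ι, (∀ j : ι, par j = i → j = i) → ∃ e : E, leafMap e = i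
  branch : ∀ i : ι, (∃ j : ι, par j = i ∧ j ≠ i) → 2 ≤ {j : ι | par j = i ∧ j ≠ i}.ncard

/-- The set `L[t]` of hyperedges assigned to leaves below `t`. -/
noncomputable def SBD.Lset [Fintype E] (T : SBD E) (t : T.ι) : Finset E :=
  Finset.univ.filter fun e => ∃ n : ℕ, T.par^[n] (T.leafMap e) = t

/-- The children of the root. -/
noncomputable def SBD.chd [Fintype E] (T : SBD E) : Finset T.ι :=
  letI := T.fin
  Finset.univ.filter fun j => T.par j = T.root ∧ j ≠ T.root

/-- The vertex sets of the hyperedges of the torso of the root: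
the hyperedge corresponding to a child `t` has vertex set `bd(L[t])`. -/
noncomputable def SBD.Ft [Fintype E] (T : SBD E) (F : E → Finset V) : T.ι → Finset V :=
  fun t => bdIn F Finset.univ (T.Lset t)

/-- Downwards well-linkedness of a superbranch decomposition. -/
def DownWL [Fintype E] (F : E → Finset V) (T : SBD E) : Prop :=
  ∀ t : T.ι, WellLinkedIn F Finset.univ (T.Lset t)

/-- The adhesion size of the superbranch decomposition is at most `α`. -/
def AdhLE [Fintype E] (F : E → Finset V) (T : SBD E) (α : ℕ) : Prop :=
  ∀ t : T.ι, t ≠ T.root → lamIn F Finset.univ (T.Lset t) ≤ α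

/-- A rooted tree decomposition (given by a root and a tree decomposition). -/
structure RTreeDecompOn (Adj : V → V → Prop) (s : Finset V) extends TreeDecompOn Adj s where
  root : ι

/-- A `(k, c)`-protrusion decomposition exists. -/
def HasProtrusionDecomp (Adj : V → V → Prop) (s : Finset V) (k : ℝ) (c : ℕ) : Prop :=
  ∃ D : RTreeDecompOn Adj s,
    ((D.bag D.root).card : ℝ) ≤ k ∧
    ((D.tr.neighborSet D.root).ncard : ℝ) ≤ k ∧
    ∀ i, i ≠ D.root → (D.bag i).card ≤ c

/-- A finite simple graph on the vertex universe `ℕ`. -/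
structure FGraph where
  verts : Finset ℕ
  Adj : ℕ → ℕ → Prop
  symm : ∀ u v, Adj u v → Adj v u
  loopless : ∀ u, ¬ Adj u u
  supp : ∀ u v, Adj u v → u ∈ verts ∧ v ∈ verts

/-- The `SimpleGraph` of an `FGraph`. -/
def FGraph.toSG (G : FGraph) : SimpleGraph ℕ where
  Adj := G.Adj
  symm := ⟨fun u v h => G.symm u v h⟩
  loopless := ⟨fun u h => G.loopless u h⟩

/-- A rooted tree decomposition, with the rooted tree given by a parent map and
connectivity phrased for rooted trees. -/
structure RootedTD (Adj : V → V → Prop) (s : Finset V) where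
  ι : Type
  fin : Fintype ι
  root : ι
  par : ι → ι
  par_root : par root = root
  reach : ∀ i : ι, ∃ n : ℕ, par^[n] i = root
  bag : ι → Finset V
  bag_sub : ∀ i, bag i ⊆ s
  cover_v : ∀ v ∈ s, ∃ i, v ∈ bag i
  cover_e : ∀ u ∈ s, ∀ v ∈ s, Adj u v → ∃ i, u ∈ bag i ∧ v ∈ bag i
  conn : ∀ v ∈ s, ∃ m : ι, v ∈ bag m ∧ ∀ i : ι, v ∈ bag i →
    ∃ n : ℕ, par^[n] i = m ∧ ∀ l ≤ n, v ∈ bag (par^[l] i)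


lemma mem_Vs {F : E → Finset V} {A : Finset E} {v : V} :
    v ∈ Vs F A ↔ ∃ e ∈ A, v ∈ F e := by simp [Vs]

lemma lam_submod [Fintype E] (F : E → Finset V) (X Y : Finset E) :
    lamIn F Finset.univ (X ∪ Y) + lamIn F Finset.univ (X ∩ Y) ≤
      lamIn F Finset.univ X + lamIn F Finset.univ Y := by
  classical
  have hsub1 : bdIn F Finset.univ (X ∪ Y) ∪ bdIn F Finset.univ (X ∩ Y) ⊆
      bdIn F Finset.univ X ∪ bdIn F Finset.univ Y := by
    intro v hv
    simp only [Finset.mem_union, bdIn, Finset.mem_inter, mem_Vs] at hv ⊢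
    rcases hv with ⟨⟨e, he, hve⟩, ⟨f, hf, hvf⟩⟩ | ⟨⟨e, he, hve⟩, ⟨f, hf, hvf⟩⟩
    · simp only [Finset.mem_sdiff, Finset.mem_union, Finset.mem_univ, true_and,
        not_or] at hf
      rcases he with he' | he'
      · exact Or.inl ⟨⟨e, he', hve⟩, ⟨f, by simp [hf.1], hvf⟩⟩
      · exact Or.inr ⟨⟨e, he', hve⟩, ⟨f, by simp [hf.2], hvf⟩⟩
    · simp only [Finset.mem_sdiff, Finset.mem_inter, Finset.mem_univ, true_and,
        not_and_or] at hf
      rcases hf with hf' | hf'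
      · exact Or.inl ⟨⟨e, he.1, hve⟩, ⟨f, by simp [hf'], hvf⟩⟩
      · exact Or.inr ⟨⟨e, he.2, hve⟩, ⟨f, by simp [hf'], hvf⟩⟩
  have hsub2 : bdIn F Finset.univ (X ∪ Y) ∩ bdIn F Finset.univ (X ∩ Y) ⊆
      bdIn F Finset.univ X ∩ bdIn F Finset.univ Y := by
    intro v hv
    simp only [Finset.mem_inter, bdIn, mem_Vs] at hv ⊢
    obtain ⟨⟨-, ⟨f, hf, hvf⟩⟩, ⟨⟨e, he, hve⟩, -⟩⟩ := hv
    simp only [Finset.mem_sdiff, Finset.mem_union, Finset.mem_univ, true_and,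
      not_or] at hf
    rcases he with ⟨heX, heY⟩
    exact ⟨⟨⟨e, heX, hve⟩, ⟨f, by simp [hf.1], hvf⟩⟩,
      ⟨⟨e, heY, hve⟩, ⟨f, by simp [hf.2], hvf⟩⟩⟩
  have h1 := Finset.card_le_card hsub1
  have h2 := Finset.card_le_card hsub2
  have e1 := Finset.card_union_add_card_inter (bdIn F Finset.univ (X ∪ Y))
    (bdIn F Finset.univ (X ∩ Y))
  have e2 := Finset.card_union_add_card_inter (bdIn F Finset.univ X)
    (bdIn F Finset.univ Y)
  simp only [lamIn]
  omega

lemma lam_compl [Fintype E] (F : E → Finset V) (X : Finset E) :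
    lamIn F Finset.univ (Finset.univ \ X) = lamIn F Finset.univ X := by
  classical
  have : Finset.univ \ (Finset.univ \ X) = X := by
    simp [Finset.sdiff_sdiff_self_left]
  simp [lamIn, bdIn, this, Finset.inter_comm]

/-- uncrossing lemma. -/
theorem statement0 {V E : Type} [Fintype V] [Fintype E] (F : E → Finset V)
    (A B : Finset E) (hA : WellLinkedIn F Finset.univ A) :
    lamIn F Finset.univ (B ∪ A) ≤ lamIn F Finset.univ B ∨
      lamIn F Finset.univ (B \ A) ≤ lamIn F Finset.univ B := by
  classical
  have hpart := hA (A ∩ B) (A \ B) (by ext e; simp only [Finset.mem_union, Finset.mem_inter, Finset.mem_sdiff]; tauto) (by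
    ext e; simp only [Finset.mem_inter, Finset.mem_sdiff, Finset.notMem_empty,
      iff_false]; tauto)
  rcases hpart with hle | hle
  · -- λ(A) ≤ λ(A∩B); use submodularity on B, A
    have hs := lam_submod F B A
    rw [Finset.inter_comm B A] at hs
    exact Or.inl (by omega)
  · -- λ(A) ≤ λ(A\B); use submodularity on B, univ\A
    have hs := lam_submod F B (Finset.univ \ A)
    have h1 : B ∪ (Finset.univ \ A) = Finset.univ \ (A \ B) := by
      ext e; simp only [Finset.mem_union, Finset.mem_sdiff, Finset.mem_univ,
        true_and]; tauto
    have h2 : B ∩ (Finset.univ \ A) = B \ A := by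
      ext e; simp [Finset.mem_sdiff]
    rw [h1, h2, lam_compl, lam_compl] at hs
    exact Or.inr (by omega)

end Paper
end

section
/- Let G be a hypergraph, let A ⊆ E(G) be internally connected, and let B ⊆ E(G). If bd(B) ∩ int(A) = ∅ and A ∩ B ≠ ∅, then A ⊆ B. -/
open scoped Classical

namespace Paper

variable {V : Type} {E : Type}

/-- an internally connected set not crossing the boundary of `B`
and intersecting `B` is contained in `B`. -/
theorem statement2 {V E : Type} [Fintype V] [Fintype E] (F : E → Finset V)
    (A B : Finset E) (hA : InternallyConnectedIn F Finset.univ A)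
    (hdisj : bdIn F Finset.univ B ∩ intIn F Finset.univ A = ∅)
    (hmeet : (A ∩ B).Nonempty) :
    A ⊆ B := by
  by_contra hnot
  obtain ⟨hAne, hIC⟩ := hA
  apply hIC
  have hne2 : (A \ B).Nonempty := by
    rw [Finset.not_subset] at hnot
    obtain ⟨e, heA, heB⟩ := hnot
    exact ⟨e, Finset.mem_sdiff.2 ⟨heA, heB⟩⟩
  refine ⟨A ∩ B, A \ B, ?_, ?_, hmeet, hne2, ?_, ?_⟩
  · ext e; simp only [Finset.mem_union, Finset.mem_inter, Finset.mem_sdiff]; tauto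
  · ext e; simp only [Finset.mem_inter, Finset.mem_sdiff, Finset.notMem_empty, iff_false]
    tauto
  · intro v hv
    simp only [bdIn, Vs, Finset.mem_inter, Finset.mem_biUnion, Finset.mem_sdiff,
      Finset.mem_inter, Finset.mem_univ, true_and] at hv ⊢
    obtain ⟨⟨e1, he1, hve1⟩, e2, he2, hve2⟩ := hv
    refine ⟨⟨e1, he1.1, hve1⟩, ?_⟩
    by_contra h
    push_neg at h
    have he2A : e2 ∈ A := by
      by_contra h2; exact h e2 h2 hve2
    have he2B : e2 ∉ B := fun hB => he2 ⟨he2A, hB⟩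
    have hvbdB : v ∈ bdIn F Finset.univ B := by
      simp only [bdIn, Vs, Finset.mem_inter, Finset.mem_biUnion, Finset.mem_sdiff,
        Finset.mem_univ, true_and]
      exact ⟨⟨e1, he1.2, hve1⟩, e2, he2B, hve2⟩
    have hvint : v ∈ intIn F Finset.univ A := by
      simp only [intIn, bdIn, Vs, Finset.mem_sdiff, Finset.mem_inter, Finset.mem_biUnion,
        Finset.mem_univ, true_and]
      exact ⟨⟨e1, he1.1, hve1⟩, fun hmem => by
        obtain ⟨_, e', he', hve'⟩ := hmem; exact h e' he' hve'⟩
    have : v ∈ bdIn F Finset.univ B ∩ intIn F Finset.univ A :=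
      Finset.mem_inter.2 ⟨hvbdB, hvint⟩
    rw [hdisj] at this
    exact absurd this (Finset.notMem_empty v)
  · intro v hv
    simp only [bdIn, Vs, Finset.mem_inter, Finset.mem_biUnion, Finset.mem_sdiff,
      Finset.mem_univ, true_and] at hv ⊢
    obtain ⟨⟨e1, he1, hve1⟩, e2, he2, hve2⟩ := hv
    refine ⟨⟨e1, he1.1, hve1⟩, ?_⟩
    by_contra h
    push_neg at h
    have he2A : e2 ∈ A := by
      by_contra h2; exact h e2 h2 hve2
    have he2B : e2 ∈ B := by
      by_contra hB; exact he2 ⟨he2A, hB⟩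
    have hvbdB : v ∈ bdIn F Finset.univ B := by
      simp only [bdIn, Vs, Finset.mem_inter, Finset.mem_biUnion, Finset.mem_sdiff,
        Finset.mem_univ, true_and]
      exact ⟨⟨e2, he2B, hve2⟩, e1, he1.2, hve1⟩
    have hvint : v ∈ intIn F Finset.univ A := by
      simp only [intIn, bdIn, Vs, Finset.mem_sdiff, Finset.mem_inter, Finset.mem_biUnion,
        Finset.mem_univ, true_and]
      exact ⟨⟨e1, he1.1, hve1⟩, fun hmem => by
        obtain ⟨_, e', he', hve'⟩ := hmem; exact h e' he' hve'⟩
    have : v ∈ bdIn F Finset.univ B ∩ intIn F Finset.univ A :=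
      Finset.mem_inter.2 ⟨hvbdB, hvint⟩
    rw [hdisj] at this
    exact absurd this (Finset.notMem_empty v)

end Paper
end

section
/- For every hypergraph G and every set B ⊆ E(G), there exists a partition of B into at most 2^{λ(B)} parts, each of which is well-linked in G. -/
open scoped Classical

namespace Paper

variable {V : Type} {E : Type}

private lemma statement4_aux {V E : Type} [Fintype V] [Fintype E] (F : E → Finset V) :
    ∀ n : ℕ, ∀ B : Finset E, lamIn F Finset.univ B ≤ n →
    ∃ 𝔅 : Finset (Finset E),
      𝔅.card ≤ 2 ^ lamIn F Finset.univ B ∧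
      (∀ X ∈ 𝔅, X.Nonempty ∧ X ⊆ B ∧ WellLinkedIn F Finset.univ X) ∧
      (∀ X ∈ 𝔅, ∀ Y ∈ 𝔅, X ≠ Y → Disjoint X Y) ∧
      𝔅.biUnion id = B := by
  intro n
  induction n using Nat.strong_induction_on with
  | _ n ih =>
    intro B hB
    by_cases hWL : WellLinkedIn F Finset.univ B
    · rcases B.eq_empty_or_nonempty with hBe | hBne
      · refine ⟨∅, by simp, by simp, by simp, by simp [hBe]⟩
      · refine ⟨{B}, ?_, ?_, ?_, by simp⟩
        · simpa using Nat.one_le_two_pow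
        · intro X hX
          simp only [Finset.mem_singleton] at hX
          subst hX
          exact ⟨hBne, subset_rfl, hWL⟩
        · intro X hX Y hY hXY
          simp only [Finset.mem_singleton] at hX hY
          exact absurd (hX.trans hY.symm) hXY
    · unfold WellLinkedIn at hWL
      push_neg at hWL
      obtain ⟨A1, A2, hu, hi, h1, h2⟩ := hWL
      have hA1B : A1 ⊆ B := hu ▸ Finset.subset_union_left
      have hA2B : A2 ⊆ B := hu ▸ Finset.subset_union_right
      have hpos : 1 ≤ lamIn F Finset.univ B := by omega
      obtain ⟨𝔅1, hc1, hp1, hd1, hb1⟩ :=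
        ih (lamIn F Finset.univ A1) (by omega) A1 le_rfl
      obtain ⟨𝔅2, hc2, hp2, hd2, hb2⟩ :=
        ih (lamIn F Finset.univ A2) (by omega) A2 le_rfl
      refine ⟨𝔅1 ∪ 𝔅2, ?_, ?_, ?_, ?_⟩
      · have e1 : lamIn F Finset.univ A1 ≤ lamIn F Finset.univ B - 1 := by omega
        have e2 : lamIn F Finset.univ A2 ≤ lamIn F Finset.univ B - 1 := by omega
        calc (𝔅1 ∪ 𝔅2).card ≤ 𝔅1.card + 𝔅2.card := Finset.card_union_le _ _
          _ ≤ 2 ^ (lamIn F Finset.univ B - 1) + 2 ^ (lamIn F Finset.univ B - 1) :=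
              add_le_add (hc1.trans (Nat.pow_le_pow_right (by norm_num) e1))
                (hc2.trans (Nat.pow_le_pow_right (by norm_num) e2))
          _ = 2 ^ (lamIn F Finset.univ B - 1 + 1) := by ring
          _ = 2 ^ lamIn F Finset.univ B := by congr 1; omega
      · intro X hX
        rcases Finset.mem_union.mp hX with h | h
        · obtain ⟨hne, hsub, hwl⟩ := hp1 X h
          exact ⟨hne, hsub.trans hA1B, hwl⟩
        · obtain ⟨hne, hsub, hwl⟩ := hp2 X h
          exact ⟨hne, hsub.trans hA2B, hwl⟩
      · have hdisj : Disjoint A1 A2 := Finset.disjoint_iff_inter_eq_empty.mpr hi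
        intro X hX Y hY hXY
        rcases Finset.mem_union.mp hX with hx | hx <;>
          rcases Finset.mem_union.mp hY with hy | hy
        · exact hd1 X hx Y hy hXY
        · exact hdisj.mono (hp1 X hx).2.1 (hp2 Y hy).2.1
        · exact (hdisj.mono (hp1 Y hy).2.1 (hp2 X hx).2.1).symm
        · exact hd2 X hx Y hy hXY
      · rw [← hu, ← hb1, ← hb2]
        ext x
        simp only [Finset.mem_biUnion, Finset.mem_union, id_eq]
        constructor
        · rintro ⟨a, ha | ha, hx⟩
          · exact Or.inl ⟨a, ha, hx⟩
          · exact Or.inr ⟨a, ha, hx⟩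
        · rintro (⟨a, ha, hx⟩ | ⟨a, ha, hx⟩)
          · exact ⟨a, Or.inl ha, hx⟩
          · exact ⟨a, Or.inr ha, hx⟩

/-- every set `B` of hyperedges can be partitioned into at most
`2 ^ λ(B)` well-linked parts. -/
theorem statement4 {V E : Type} [Fintype V] [Fintype E] (F : E → Finset V)
    (B : Finset E) :
    ∃ 𝔅 : Finset (Finset E),
      𝔅.card ≤ 2 ^ lamIn F Finset.univ B ∧
      (∀ X ∈ 𝔅, X.Nonempty ∧ X ⊆ B ∧ WellLinkedIn F Finset.univ X) ∧
      (∀ X ∈ 𝔅, ∀ Y ∈ 𝔅, X ≠ Y → Disjoint X Y) ∧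
      𝔅.biUnion id = B :=
  statement4_aux F (lamIn F Finset.univ B) B le_rfl

end Paper
end

section
/- For every graph H there exists a constant c, depending only on H, such that every H-topological-minor-free finite simple graph G contains at most c · |V(G)| cliques, where a clique is a non-empty set of pairwise adjacent vertices. -/
open scoped Classical

namespace Paper

variable {V : Type} {E : Type}

/-! ### Auxiliary development for statement5 -/

section Statement5Aux

lemma topMinorOn_mono {α β : Type} {H : SimpleGraph α} {G : SimpleGraph β} {s s' : Set β}
    (hss : s ⊆ s') (h : IsTopMinorOn H G s) : IsTopMinorOn H G s' := by
  obtain ⟨φ, h1, h2, P, h3, h4, h5, h6⟩ := h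
  exact ⟨φ, fun a => hss (h1 a), h2, P, h3,
    fun u v h w hw => hss (h4 u v h w hw), h5, h6⟩

lemma topMinorOn_pullback {α β γ : Type} {H1 : SimpleGraph α} {H2 : SimpleGraph β}
    {G : SimpleGraph γ} {s : Set γ} (f : β → α) (hf : Function.Injective f)
    (hadj : ∀ u v, H2.Adj u v → H1.Adj (f u) (f v))
    (h : IsTopMinorOn H1 G s) : IsTopMinorOn H2 G s := by
  obtain ⟨φ, h1, h2, P, h3, h4, h5, h6⟩ := h
  refine ⟨φ ∘ f, fun a => h1 (f a), h2.comp hf,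
    fun u v h => P (f u) (f v) (hadj u v h), fun u v h => h3 _ _ _,
    fun u v h => h4 _ _ _, fun u v h w hw hwu hwv a => h5 _ _ _ w hw hwu hwv (f a),
    fun u v u' v' h h' hne w hw hw' => h6 _ _ _ _ _ _ ?_ w hw hw'⟩
  intro hcontra
  apply hne
  rw [Sym2.mk_eq_mk_iff (p := (f u, f v)) (q := (f u', f v'))] at hcontra
  rw [Sym2.mk_eq_mk_iff (p := (u, v)) (q := (u', v'))]
  rcases hcontra with h' | h'
  · left
    exact Prod.ext (hf (congrArg Prod.fst h')) (hf (congrArg Prod.snd h'))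
  · right
    exact Prod.ext (hf (congrArg Prod.fst h')) (hf (congrArg Prod.snd h'))

/-- A graph with no edges and a subsingleton vertex type is a topological minor
of anything on a nonempty vertex set. -/
lemma topMinorOn_single {α β : Type} [Subsingleton α] {H : SimpleGraph α}
    {G : SimpleGraph β} {s : Set β} {v : β} (hv : v ∈ s) : IsTopMinorOn H G s := by
  have hno : ∀ u w : α, ¬ H.Adj u w := by
    intro u w h
    exact h.ne (Subsingleton.elim u w)
  exact ⟨fun _ => v, fun _ => hv, fun a b _ => Subsingleton.elim a b,
    fun u w h => absurd h (hno u w),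
    fun u w h => absurd h (hno u w),
    fun u w h => absurd h (hno u w),
    fun u w h => absurd h (hno u w),
    fun u w u' w' h => absurd h (hno u w)⟩

end Statement5Aux
section Statement5Aux2

variable {V : Type} [DecidableEq V] (G : SimpleGraph V)

/-- Degree of `v` into the set `S`. -/
noncomputable def dS (S : Finset V) (v : V) : ℕ := (S.filter (fun u => G.Adj v u)).card

/-- Twice the number of edges inside `S` (ordered adjacent pairs). -/
noncomputable def eS (S : Finset V) : ℕ :=
  ((S ×ˢ S).filter (fun p => G.Adj p.1 p.2)).card

lemma eS_eq_sum (S : Finset V) : eS G S = ∑ v ∈ S, dS G S v := by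
  unfold eS dS
  rw [Finset.card_filter, Finset.sum_product]
  refine Finset.sum_congr rfl fun v _ => ?_
  rw [Finset.card_filter]

lemma eS_remove {S : Finset V} {w : V} (hw : w ∈ S) :
    eS G S = eS G (S.erase w) + 2 * dS G S w := by
  have key : ∀ v ∈ S.erase w,
      dS G S v = dS G (S.erase w) v + (if G.Adj v w then 1 else 0) := by
    intro v _
    unfold dS
    rw [Finset.filter_erase]
    by_cases h : G.Adj v w
    · rw [if_pos h, Finset.card_erase_of_mem (by simp [hw, h])]
      have : 0 < (Finset.filter (fun u => G.Adj v u) S).card :=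
        Finset.card_pos.2 ⟨w, by simp [hw, h]⟩
      omega
    · rw [if_neg h, Finset.erase_eq_of_notMem (by simp [h])]
      omega
  have hsum : eS G S = dS G S w + ∑ v ∈ S.erase w, dS G S v := by
    rw [eS_eq_sum, ← Finset.add_sum_erase _ _ hw]
  have hfil : (∑ x ∈ S.erase w, if G.Adj x w then 1 else 0) = dS G S w := by
    rw [← Finset.card_filter]
    unfold dS
    have : Finset.filter (fun x => G.Adj x w) (S.erase w)
        = Finset.filter (fun u => G.Adj w u) S := by
      rw [Finset.filter_erase]
      rw [Finset.erase_eq_of_notMem (by simp)]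
      apply Finset.filter_congr
      intro x _
      simp [SimpleGraph.adj_comm]
    rw [this]
  rw [hsum, Finset.sum_congr rfl key, Finset.sum_add_distrib, ← eS_eq_sum, hfil]
  ring

lemma eS_pos_nonempty {S : Finset V} (h : 0 < eS G S) : S.Nonempty := by
  rcases S.eq_empty_or_nonempty with rfl | hS
  · simp [eS] at h
  · exact hS

/-- `U` is connected inside `G`: any two of its vertices are joined by a walk
whose support stays in `U`. -/
def ConnIn (U : Finset V) : Prop :=
  ∀ a ∈ U, ∀ b ∈ U, ∃ p : G.Walk a b, ∀ x ∈ p.support, x ∈ U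

lemma connIn_singleton (v : V) : ConnIn G {v} := by
  intro a ha b hb
  simp only [Finset.mem_singleton] at ha hb
  subst ha; subst hb
  exact ⟨SimpleGraph.Walk.nil, by simp⟩

lemma connIn_insert {U : Finset V} (hU : ConnIn G U) {w u : V} (hu : u ∈ U)
    (hadj : G.Adj w u) : ConnIn G (insert w U) := by
  have hW : ∀ b ∈ U, ∃ p : G.Walk w b, ∀ x ∈ p.support, x ∈ insert w U := by
    intro b hb
    obtain ⟨p, hp⟩ := hU u hu b hb
    refine ⟨SimpleGraph.Walk.cons hadj p, ?_⟩
    intro x hx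
    rw [SimpleGraph.Walk.support_cons, List.mem_cons] at hx
    rcases hx with rfl | hx
    · exact Finset.mem_insert_self _ _
    · exact Finset.mem_insert_of_mem (hp x hx)
  intro a ha b hb
  rcases Finset.mem_insert.1 ha with haw | ha2
  · rcases Finset.mem_insert.1 hb with hbw | hb2
    · refine ⟨SimpleGraph.Walk.nil.copy rfl (haw.trans hbw.symm), ?_⟩
      intro x hx
      rw [SimpleGraph.Walk.support_copy, SimpleGraph.Walk.support_nil,
        List.mem_singleton] at hx
      rw [hx, haw]
      exact Finset.mem_insert_self _ _
    · obtain ⟨p, hp⟩ := hW b hb2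
      exact ⟨p.copy haw.symm rfl, by
        intro x hx; rw [SimpleGraph.Walk.support_copy] at hx; exact hp x hx⟩
  · rcases Finset.mem_insert.1 hb with hbw | hb2
    · obtain ⟨p, hp⟩ := hW a ha2
      refine ⟨p.reverse.copy rfl hbw.symm, ?_⟩
      intro x hx
      rw [SimpleGraph.Walk.support_copy, SimpleGraph.Walk.support_reverse,
        List.mem_reverse] at hx
      exact hp x hx
    · obtain ⟨p, hp⟩ := hU a ha2 b hb2
      exact ⟨p, fun x hx => Finset.mem_insert_of_mem (hp x hx)⟩

lemma connIn_path {U : Finset V} (hU : ConnIn G U) {a b : V} (ha : a ∈ U) (hb : b ∈ U) :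
    ∃ p : G.Walk a b, p.IsPath ∧ ∀ x ∈ p.support, x ∈ U := by
  obtain ⟨p, hp⟩ := hU a ha b hb
  exact ⟨p.toPath, p.toPath.2, fun x hx => hp x (SimpleGraph.Walk.support_toPath_subset p hx)⟩

end Statement5Aux2

/-- The graph on `Fin (m+1)` which is complete on the nonzero vertices, with vertex `0`
joined exactly to `1, …, j`. -/
def Kpart (m j : ℕ) : SimpleGraph (Fin (m+1)) where
  Adj u v := u ≠ v ∧ (u = 0 → (v : ℕ) ≤ j) ∧ (v = 0 → (u : ℕ) ≤ j)
  symm := ⟨fun u v (h : u ≠ v ∧ (u = 0 → (v : ℕ) ≤ j) ∧ (v = 0 → (u : ℕ) ≤ j)) =>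
    ⟨h.1.symm, h.2.2, h.2.1⟩⟩
  loopless := ⟨fun u (h : u ≠ u ∧ _) => h.1 rfl⟩
section Statement5Steps

variable {V : Type} [DecidableEq V] {G : SimpleGraph V}

lemma step_extend {m j : ℕ} (hj2 : 2 ≤ j) (hjm : j ≤ m)
    {S U Nf : Finset V} (hUS : U ⊆ S) (hNS : Nf ⊆ S)
    (hUN : ∀ x ∈ Nf, x ∉ U) (hconn : ConnIn G U)
    (hnbr : ∀ x ∈ Nf, ∃ u ∈ U, G.Adj u x)
    (model : IsTopMinorOn (Kpart m (j-1)) G (↑Nf : Set V)) :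
    IsTopMinorOn (Kpart m j) G (↑S : Set V) := by
  obtain ⟨φ, hφ, hinj, P, hpath, hsupp, hint, hdisj⟩ := model
  set jv : Fin (m+1) := ⟨j, Nat.lt_succ_of_le hjm⟩ with hjv
  have h0j : (0 : Fin (m+1)) ≠ jv := by
    intro h
    have : (0 : ℕ) = j := congrArg Fin.val h
    omega
  have hφNf : ∀ a, φ a ∈ Nf := fun a => Finset.mem_coe.1 (hφ a)
  obtain ⟨a, haU, haadj⟩ := hnbr (φ 0) (hφNf 0)
  obtain ⟨b, hbU, hbadj⟩ := hnbr (φ jv) (hφNf jv)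
  obtain ⟨Q, hQpath, hQsub⟩ := connIn_path G hconn haU hbU
  have hφ0U : φ 0 ∉ U := hUN _ (hφNf 0)
  have hφjU : φ jv ∉ U := hUN _ (hφNf jv)
  have hφ0j : φ 0 ≠ φ jv := fun h => h0j (hinj h)
  set W' : G.Walk (φ 0) (φ jv) :=
    SimpleGraph.Walk.cons haadj.symm (Q.append (SimpleGraph.Walk.cons hbadj SimpleGraph.Walk.nil)) with hW'
  have hWsup : W'.support = φ 0 :: (Q.support ++ [φ jv]) := by
    simp [hW', SimpleGraph.Walk.support_append]
  have hWmem : ∀ w ∈ W'.support, w = φ 0 ∨ w = φ jv ∨ w ∈ U := by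
    intro w hw
    rw [hWsup, List.mem_cons, List.mem_append, List.mem_singleton] at hw
    rcases hw with h | h | h
    · exact Or.inl h
    · exact Or.inr (Or.inr (hQsub w h))
    · exact Or.inr (Or.inl h)
  have hWS : ∀ w ∈ W'.support, w ∈ (↑S : Set V) := by
    intro w hw
    rcases hWmem w hw with rfl | rfl | h
    · exact Finset.mem_coe.2 (hNS (hφNf 0))
    · exact Finset.mem_coe.2 (hNS (hφNf jv))
    · exact Finset.mem_coe.2 (hUS h)
  have hWpath : W'.IsPath := by
    rw [SimpleGraph.Walk.isPath_def, hWsup, List.nodup_cons]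
    constructor
    · intro hmem
      rcases List.mem_append.1 hmem with h | h
      · exact hφ0U (hQsub _ h)
      · exact hφ0j (List.mem_singleton.1 h)
    · rw [List.nodup_append]
      refine ⟨(SimpleGraph.Walk.isPath_def Q).1 hQpath, List.nodup_singleton _, ?_⟩
      intro x hx y hy hxy
      rw [List.mem_singleton] at hy
      subst hy
      subst hxy
      exact hφjU (hQsub _ hx)
  have htrans : ∀ u v : Fin (m+1), (Kpart m j).Adj u v → ¬(u = 0 ∧ v = jv) →
      ¬(u = jv ∧ v = 0) → (Kpart m (j-1)).Adj u v := by
    rintro u v ⟨hne, h1, h2⟩ hn1 hn2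
    refine ⟨hne, ?_, ?_⟩
    · intro hu0
      have hvj : v ≠ jv := fun h => hn1 ⟨hu0, h⟩
      have := h1 hu0
      have : (v : ℕ) ≠ j := fun h => hvj (Fin.ext h)
      omega
    · intro hv0
      have huj : u ≠ jv := fun h => hn2 ⟨h, hv0⟩
      have := h2 hv0
      have : (u : ℕ) ≠ j := fun h => huj (Fin.ext h)
      omega
  have hsuppNf : ∀ u v (h : (Kpart m (j-1)).Adj u v), ∀ w ∈ (P u v h).support, w ∈ Nf :=
    fun u v h w hw => Finset.mem_coe.1 (hsupp u v h w hw)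
  -- shared-vertex fact between the new walk and any old path
  have hshared : ∀ w, w ∈ W'.support → w ∈ Nf → w = φ 0 ∨ w = φ jv := by
    intro w hw hwNf
    rcases hWmem w hw with h | h | h
    · exact Or.inl h
    · exact Or.inr h
    · exact absurd h (hUN w hwNf)
  refine ⟨φ, fun a' => Finset.mem_coe.2 (hNS (hφNf a')), hinj,
    fun u v h =>
      if h1 : u = 0 ∧ v = jv then W'.copy (by rw [h1.1]) (by rw [h1.2])
      else if h2 : u = jv ∧ v = 0 then W'.reverse.copy (by rw [h2.1]) (by rw [h2.2])
      else P u v (htrans u v h h1 h2),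
    ?_, ?_, ?_, ?_⟩
  · -- paths
    intro u v h
    dsimp only
    by_cases h1 : u = 0 ∧ v = jv
    · obtain ⟨rfl, rfl⟩ := h1
      rw [dif_pos ⟨rfl, rfl⟩, SimpleGraph.Walk.isPath_copy]
      exact hWpath
    · rw [dif_neg h1]
      by_cases h2 : u = jv ∧ v = 0
      · obtain ⟨rfl, rfl⟩ := h2
        rw [dif_pos ⟨rfl, rfl⟩, SimpleGraph.Walk.isPath_copy]
        exact hWpath.reverse
      · rw [dif_neg h2]
        exact hpath u v _
  · -- supports in S
    intro u v h w hw
    dsimp only at hw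
    by_cases h1 : u = 0 ∧ v = jv
    · obtain ⟨rfl, rfl⟩ := h1
      rw [dif_pos ⟨rfl, rfl⟩, SimpleGraph.Walk.support_copy] at hw
      exact hWS w hw
    · rw [dif_neg h1] at hw
      by_cases h2 : u = jv ∧ v = 0
      · obtain ⟨rfl, rfl⟩ := h2
        rw [dif_pos ⟨rfl, rfl⟩, SimpleGraph.Walk.support_copy,
          SimpleGraph.Walk.support_reverse, List.mem_reverse] at hw
        exact hWS w hw
      · rw [dif_neg h2] at hw
        exact Finset.mem_coe.2 (hNS (hsuppNf u v _ w hw))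
  · -- internal vertices avoid branch vertices
    intro u v h w hw hwu hwv a'
    dsimp only at hw
    by_cases h1 : u = 0 ∧ v = jv
    · obtain ⟨rfl, rfl⟩ := h1
      rw [dif_pos ⟨rfl, rfl⟩, SimpleGraph.Walk.support_copy] at hw
      rcases hWmem w hw with h' | h' | h'
      · exact absurd h' hwu
      · exact absurd h' hwv
      · exact fun heq => hUN (φ a') (hφNf a') (heq ▸ h')
    · rw [dif_neg h1] at hw
      by_cases h2 : u = jv ∧ v = 0
      · obtain ⟨rfl, rfl⟩ := h2
        rw [dif_pos ⟨rfl, rfl⟩, SimpleGraph.Walk.support_copy,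
          SimpleGraph.Walk.support_reverse, List.mem_reverse] at hw
        rcases hWmem w hw with h' | h' | h'
        · exact absurd h' hwv
        · exact absurd h' hwu
        · exact fun heq => hUN (φ a') (hφNf a') (heq ▸ h')
      · rw [dif_neg h2] at hw
        exact hint u v _ w hw hwu hwv a'
  · -- pairwise intersection
    intro u v u' v' h h' hne w hw hw'
    dsimp only at hw hw'
    by_cases h1 : u = 0 ∧ v = jv
    · obtain ⟨rfl, rfl⟩ := h1
      rw [dif_pos ⟨rfl, rfl⟩, SimpleGraph.Walk.support_copy] at hw
      by_cases h1' : u' = 0 ∧ v' = jv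
      · obtain ⟨rfl, rfl⟩ := h1'
        exact absurd rfl hne
      · rw [dif_neg h1'] at hw'
        by_cases h2' : u' = jv ∧ v' = 0
        · obtain ⟨rfl, rfl⟩ := h2'
          exact absurd (Sym2.eq_swap) hne
        · rw [dif_neg h2'] at hw'
          exact hshared w hw (hsuppNf u' v' _ w hw')
    · rw [dif_neg h1] at hw
      by_cases h2 : u = jv ∧ v = 0
      · obtain ⟨rfl, rfl⟩ := h2
        rw [dif_pos ⟨rfl, rfl⟩, SimpleGraph.Walk.support_copy,
          SimpleGraph.Walk.support_reverse, List.mem_reverse] at hw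
        by_cases h1' : u' = 0 ∧ v' = jv
        · obtain ⟨rfl, rfl⟩ := h1'
          exact absurd (Sym2.eq_swap) hne
        · rw [dif_neg h1'] at hw'
          by_cases h2' : u' = jv ∧ v' = 0
          · obtain ⟨rfl, rfl⟩ := h2'
            exact absurd rfl hne
          · rw [dif_neg h2'] at hw'
            exact (hshared w hw (hsuppNf u' v' _ w hw')).symm
      · rw [dif_neg h2] at hw
        by_cases h1' : u' = 0 ∧ v' = jv
        · obtain ⟨rfl, rfl⟩ := h1'
          rw [dif_pos ⟨rfl, rfl⟩, SimpleGraph.Walk.support_copy] at hw'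
          -- w on old path and on new walk ⇒ w ∈ {φ 0, φ jv} ⇒ w is a branch vertex on old path
          have hwb : w = φ 0 ∨ w = φ jv := hshared w hw' (hsuppNf u v _ w hw)
          by_contra hcon
          push_neg at hcon
          rcases hwb with rfl | rfl
          · exact hint u v _ _ hw hcon.1 hcon.2 0 rfl
          · exact hint u v _ _ hw hcon.1 hcon.2 jv rfl
        · rw [dif_neg h1'] at hw'
          by_cases h2' : u' = jv ∧ v' = 0
          · obtain ⟨rfl, rfl⟩ := h2'
            rw [dif_pos ⟨rfl, rfl⟩, SimpleGraph.Walk.support_copy,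
              SimpleGraph.Walk.support_reverse, List.mem_reverse] at hw'
            have hwb : w = φ 0 ∨ w = φ jv := hshared w hw' (hsuppNf u v _ w hw)
            by_contra hcon
            push_neg at hcon
            rcases hwb with rfl | rfl
            · exact hint u v _ _ hw hcon.1 hcon.2 0 rfl
            · exact hint u v _ _ hw hcon.1 hcon.2 jv rfl
          · rw [dif_neg h2'] at hw'
            exact hdisj u v u' v' _ _ hne w hw hw'

end Statement5Steps
section Statement5Step1

variable {V : Type} [DecidableEq V] {G : SimpleGraph V}

lemma step_vertex {m : ℕ} (hm : 1 ≤ m)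
    {S U Nf : Finset V} (hUS : U ⊆ S) (hNS : Nf ⊆ S)
    (hUN : ∀ x ∈ Nf, x ∉ U) (hnbr : ∀ x ∈ Nf, ∃ u ∈ U, G.Adj u x)
    (model : IsTopMinorOn (⊤ : SimpleGraph (Fin m)) G (↑Nf : Set V)) :
    IsTopMinorOn (Kpart m 1) G (↑S : Set V) := by
  obtain ⟨φ', hφ'c, hinj', P', hpath', hsupp', hint', hdisj'⟩ := model
  have hφNf' : ∀ a, φ' a ∈ Nf := fun a => Finset.mem_coe.1 (hφ'c a)
  set y0 : Fin m := ⟨0, hm⟩ with hy0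
  set one : Fin (m+1) := Fin.succ y0 with hone
  have honeval : (one : ℕ) = 1 := by simp [hone, hy0]
  obtain ⟨b, hbU, hbadj⟩ := hnbr (φ' y0) (hφNf' y0)
  set φ : Fin (m+1) → V := fun i => if h : i = 0 then b else φ' (i.pred h) with hφdef
  have hφ0 : φ 0 = b := by simp [hφdef]
  have hφs : ∀ (i : Fin (m+1)) (h : i ≠ 0), φ i = φ' (i.pred h) := by
    intro i h; simp [hφdef, dif_neg h]
  have hφone : φ one = φ' y0 := by
    rw [hφs one (Fin.succ_ne_zero y0), Fin.pred_succ]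
  have hbne : b ≠ φ' y0 := fun h => hUN _ (hφNf' y0) (h ▸ hbU)
  have hφmem : ∀ i, φ i ∈ Nf ∪ U := by
    intro i
    by_cases h : i = 0
    · subst h; rw [hφ0]; exact Finset.mem_union_right _ hbU
    · rw [hφs i h]; exact Finset.mem_union_left _ (hφNf' _)
  have hφS : ∀ i, φ i ∈ (↑S : Set V) := by
    intro i
    rcases Finset.mem_union.1 (hφmem i) with h | h
    · exact Finset.mem_coe.2 (hNS h)
    · exact Finset.mem_coe.2 (hUS h)
  have hinj : Function.Injective φ := by
    intro i i' heq
    by_cases h : i = 0 <;> by_cases h' : i' = 0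
    · rw [h, h']
    · rw [h] at heq ⊢
      rw [hφ0, hφs i' h'] at heq
      exact absurd (heq ▸ hbU) (hUN _ (hφNf' _))
    · rw [h'] at heq ⊢
      rw [hφ0, hφs i h] at heq
      exact absurd (heq.symm ▸ hbU) (hUN _ (hφNf' _))
    · rw [hφs i h, hφs i' h'] at heq
      exact Fin.pred_inj.1 (hinj' heq)
  have hadj1 : ∀ u v : Fin (m+1), (Kpart m 1).Adj u v → u = 0 → v = one := by
    rintro u v ⟨hne, h1, _⟩ h0
    have hv0 : v ≠ 0 := fun h => hne (h0.trans h.symm)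
    have := h1 h0
    have : (v : ℕ) = 1 := by
      have hvz : (v : ℕ) ≠ 0 := fun hz => hv0 (Fin.ext (by simp [hz]))
      omega
    exact Fin.ext (by rw [this, honeval])
  have h0one : (0 : Fin (m+1)) ≠ one := (Fin.succ_ne_zero y0).symm
  have hne0 : ∀ u v, (Kpart m 1).Adj u v → ¬(u = 0 ∧ v = one) → u ≠ 0 :=
    fun u v h hn hu => hn ⟨hu, hadj1 u v h hu⟩
  have hne0' : ∀ u v, (Kpart m 1).Adj u v → ¬(u = one ∧ v = 0) → v ≠ 0 :=
    fun u v h hn hv => hn ⟨hadj1 v u h.symm hv, hv⟩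
  have htrans : ∀ (u v : Fin (m+1)) (hu : u ≠ 0) (hv : v ≠ 0), (Kpart m 1).Adj u v →
      (⊤ : SimpleGraph (Fin m)).Adj (u.pred hu) (v.pred hv) := by
    intro u v hu hv h
    rw [SimpleGraph.top_adj]
    intro hpp
    exact h.1 (Fin.pred_inj.1 hpp)
  set W0 : G.Walk b (φ' y0) := SimpleGraph.Walk.cons hbadj SimpleGraph.Walk.nil with hW0
  have hW0sup : W0.support = [b, φ' y0] := by simp [hW0]
  have hW0path : W0.IsPath := by
    rw [SimpleGraph.Walk.isPath_def, hW0sup]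
    simp [hbne]
  set W' : G.Walk (φ 0) (φ one) := W0.copy hφ0.symm hφone.symm with hW'
  have hWsup : W'.support = [b, φ' y0] := by
    rw [hW', SimpleGraph.Walk.support_copy, hW0sup]
  have hWpath : W'.IsPath := by rw [hW', SimpleGraph.Walk.isPath_copy]; exact hW0path
  have hWS : ∀ w ∈ W'.support, w ∈ (↑S : Set V) := by
    intro w hw
    rw [hWsup, List.mem_cons, List.mem_singleton] at hw
    rcases hw with rfl | rfl
    · exact Finset.mem_coe.2 (hUS hbU)
    · exact Finset.mem_coe.2 (hNS (hφNf' y0))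
  -- a vertex shared between the new walk and a set inside Nf is φ' y0 = φ one
  have hshared : ∀ w, w ∈ W'.support → w ∈ Nf → w = φ one := by
    intro w hw hwNf
    rw [hWsup, List.mem_cons, List.mem_singleton] at hw
    rcases hw with rfl | rfl
    · exact absurd hbU (hUN _ hwNf)
    · exact hφone.symm
  have hsuppNf : ∀ u v (h : (⊤ : SimpleGraph (Fin m)).Adj u v),
      ∀ w ∈ (P' u v h).support, w ∈ Nf :=
    fun u v h w hw => Finset.mem_coe.1 (hsupp' u v h w hw)
  refine ⟨φ, hφS, hinj,
    fun u v h =>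
      if h1 : u = 0 ∧ v = one then W'.copy (by rw [h1.1]) (by rw [h1.2])
      else if h2 : u = one ∧ v = 0 then W'.reverse.copy (by rw [h2.1]) (by rw [h2.2])
      else (P' (u.pred (hne0 u v h h1)) (v.pred (hne0' u v h h2))
          (htrans u v _ _ h)).copy (hφs u _).symm (hφs v _).symm,
    ?_, ?_, ?_, ?_⟩
  · -- paths
    intro u v h
    dsimp only
    by_cases h1 : u = 0 ∧ v = one
    · obtain ⟨rfl, rfl⟩ := h1
      rw [dif_pos ⟨rfl, rfl⟩, SimpleGraph.Walk.isPath_copy]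
      exact hWpath
    · rw [dif_neg h1]
      by_cases h2 : u = one ∧ v = 0
      · obtain ⟨rfl, rfl⟩ := h2
        rw [dif_pos ⟨rfl, rfl⟩, SimpleGraph.Walk.isPath_copy]
        exact hWpath.reverse
      · rw [dif_neg h2, SimpleGraph.Walk.isPath_copy]
        exact hpath' _ _ _
  · -- supports in S
    intro u v h w hw
    dsimp only at hw
    by_cases h1 : u = 0 ∧ v = one
    · obtain ⟨rfl, rfl⟩ := h1
      rw [dif_pos ⟨rfl, rfl⟩, SimpleGraph.Walk.support_copy] at hw
      exact hWS w hw
    · rw [dif_neg h1] at hw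
      by_cases h2 : u = one ∧ v = 0
      · obtain ⟨rfl, rfl⟩ := h2
        rw [dif_pos ⟨rfl, rfl⟩, SimpleGraph.Walk.support_copy,
          SimpleGraph.Walk.support_reverse, List.mem_reverse] at hw
        exact hWS w hw
      · rw [dif_neg h2, SimpleGraph.Walk.support_copy] at hw
        exact Finset.mem_coe.2 (hNS (hsuppNf _ _ _ w hw))
  · -- internal vertices avoid branch vertices
    intro u v h w hw hwu hwv a'
    dsimp only at hw
    by_cases h1 : u = 0 ∧ v = one
    · obtain ⟨rfl, rfl⟩ := h1
      rw [dif_pos ⟨rfl, rfl⟩, SimpleGraph.Walk.support_copy, hWsup,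
        List.mem_cons, List.mem_singleton] at hw
      rcases hw with rfl | rfl
      · exact absurd hφ0.symm hwu
      · exact absurd hφone.symm hwv
    · rw [dif_neg h1] at hw
      by_cases h2 : u = one ∧ v = 0
      · obtain ⟨rfl, rfl⟩ := h2
        rw [dif_pos ⟨rfl, rfl⟩, SimpleGraph.Walk.support_copy,
          SimpleGraph.Walk.support_reverse, List.mem_reverse, hWsup,
          List.mem_cons, List.mem_singleton] at hw
        rcases hw with rfl | rfl
        · exact absurd hφ0.symm hwv
        · exact absurd hφone.symm hwu
      · rw [dif_neg h2, SimpleGraph.Walk.support_copy] at hw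
        have hwNf : w ∈ Nf := hsuppNf _ _ _ w hw
        by_cases ha' : a' = 0
        · subst ha'
          rw [hφ0]
          exact fun heq => hUN w hwNf (heq ▸ hbU)
        · rw [hφs a' ha']
          refine hint' _ _ _ w hw ?_ ?_ (a'.pred ha')
          · rw [← hφs u (hne0 u v h h1)]; exact hwu
          · rw [← hφs v (hne0' u v h h2)]; exact hwv
  · -- pairwise intersection
    intro u v u' v' h h' hne w hw hw'
    dsimp only at hw hw'
    by_cases h1 : u = 0 ∧ v = one
    · obtain ⟨rfl, rfl⟩ := h1
      rw [dif_pos ⟨rfl, rfl⟩, SimpleGraph.Walk.support_copy] at hw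
      by_cases h1' : u' = 0 ∧ v' = one
      · obtain ⟨rfl, rfl⟩ := h1'
        exact absurd rfl hne
      · rw [dif_neg h1'] at hw'
        by_cases h2' : u' = one ∧ v' = 0
        · obtain ⟨rfl, rfl⟩ := h2'
          exact absurd (Sym2.eq_swap) hne
        · rw [dif_neg h2', SimpleGraph.Walk.support_copy] at hw'
          exact Or.inr (hshared w hw (hsuppNf _ _ _ w hw'))
    · rw [dif_neg h1] at hw
      by_cases h2 : u = one ∧ v = 0
      · obtain ⟨rfl, rfl⟩ := h2
        rw [dif_pos ⟨rfl, rfl⟩, SimpleGraph.Walk.support_copy,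
          SimpleGraph.Walk.support_reverse, List.mem_reverse] at hw
        by_cases h1' : u' = 0 ∧ v' = one
        · obtain ⟨rfl, rfl⟩ := h1'
          exact absurd (Sym2.eq_swap) hne
        · rw [dif_neg h1'] at hw'
          by_cases h2' : u' = one ∧ v' = 0
          · obtain ⟨rfl, rfl⟩ := h2'
            exact absurd rfl hne
          · rw [dif_neg h2', SimpleGraph.Walk.support_copy] at hw'
            exact Or.inl (hshared w hw (hsuppNf _ _ _ w hw'))
      · rw [dif_neg h2, SimpleGraph.Walk.support_copy] at hw
        have hwNf : w ∈ Nf := hsuppNf _ _ _ w hw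
        have hbranch : w ∈ W'.support → w = φ u ∨ w = φ v := by
          intro hwW
          have hwone : w = φ' y0 := by rw [hshared w hwW hwNf, hφone]
          by_contra hcon
          push_neg at hcon
          have c1 : w ≠ φ' (u.pred (hne0 u v h h1)) := by
            rw [← hφs u (hne0 u v h h1)]; exact hcon.1
          have c2 : w ≠ φ' (v.pred (hne0' u v h h2)) := by
            rw [← hφs v (hne0' u v h h2)]; exact hcon.2
          exact hint' _ _ (htrans u v (hne0 u v h h1) (hne0' u v h h2) h) w hw c1 c2 y0
            hwone.symm
        by_cases h1' : u' = 0 ∧ v' = one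
        · obtain ⟨rfl, rfl⟩ := h1'
          rw [dif_pos ⟨rfl, rfl⟩, SimpleGraph.Walk.support_copy] at hw'
          exact hbranch hw'
        · rw [dif_neg h1'] at hw'
          by_cases h2' : u' = one ∧ v' = 0
          · obtain ⟨rfl, rfl⟩ := h2'
            rw [dif_pos ⟨rfl, rfl⟩, SimpleGraph.Walk.support_copy,
              SimpleGraph.Walk.support_reverse, List.mem_reverse] at hw'
            exact hbranch hw'
          · rw [dif_neg h2', SimpleGraph.Walk.support_copy] at hw'
            have hsne : (s(u.pred (hne0 u v h h1), v.pred (hne0' u v h h2)) : Sym2 (Fin m)) ≠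
                s(u'.pred (hne0 u' v' h' h1'), v'.pred (hne0' u' v' h' h2')) := by
              intro hcontra
              apply hne
              rw [Sym2.mk_eq_mk_iff (p := (u.pred (hne0 u v h h1), v.pred (hne0' u v h h2)))
                (q := (u'.pred (hne0 u' v' h' h1'), v'.pred (hne0' u' v' h' h2')))] at hcontra
              rw [Sym2.mk_eq_mk_iff (p := (u, v)) (q := (u', v'))]
              rcases hcontra with hp | hp
              · rw [Prod.ext_iff] at hp
                obtain ⟨e1, e2⟩ := hp
                simp only at e1 e2
                exact Or.inl (Prod.ext (Fin.pred_inj.1 e1) (Fin.pred_inj.1 e2))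
              · rw [Prod.swap_prod_mk, Prod.ext_iff] at hp
                obtain ⟨e1, e2⟩ := hp
                simp only at e1 e2
                refine Or.inr ?_
                rw [Prod.swap_prod_mk, Prod.ext_iff]
                exact ⟨Fin.pred_inj.1 e1, Fin.pred_inj.1 e2⟩
            have := hdisj' _ _ _ _ (htrans u v _ _ h) (htrans u' v' _ _ h') hsne w hw hw'
            rcases this with hh | hh
            · exact Or.inl (by rw [hφs u (hne0 u v h h1)]; exact hh)
            · exact Or.inr (by rw [hφs v (hne0' u v h h2)]; exact hh)

end Statement5Step1
section Statement5Main

variable {V : Type} [DecidableEq V]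

lemma mainTK (G : SimpleGraph V) :
    ∀ k m j : ℕ, 1 ≤ j → j ≤ m → m.choose 2 + j = k →
    ∀ S : Finset V, S.Nonempty → (∀ v ∈ S, 2 ^ k ≤ dS G S v) →
    IsTopMinorOn (Kpart m j) G (↑S : Set V) := by
  intro k
  induction k using Nat.strong_induction_on with
  | _ k IHk =>
  intro m j hj hjm hk
  suffices h : ∀ n (S : Finset V), S.card ≤ n → S.Nonempty →
      (∀ v ∈ S, 2 ^ k ≤ dS G S v) → IsTopMinorOn (Kpart m j) G (↑S : Set V) by
    intro S hS hdeg
    exact h S.card S le_rfl hS hdeg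
  intro n
  induction n with
  | zero =>
    intro S hcard hS _
    have := Finset.card_pos.2 hS
    omega
  | succ n IHn =>
  intro S hcard hSne hdeg
  have hk1 : 1 ≤ k := by omega
  have hpow : 2 ^ (k - 1) * 2 = 2 ^ k := by
    have hkk : k - 1 + 1 = k := by omega
    have h := pow_succ 2 (k - 1)
    rw [hkk] at h
    exact h.symm
  -- the candidate family
  have hfamne : ∃ U : Finset V, U ⊆ S ∧ U.Nonempty ∧ ConnIn G U ∧
      2 ^ k * (S.card - U.card + 1) ≤
        eS G (S \ U) + 2 * ((S \ U).filter (fun w => ∃ u ∈ U, G.Adj u w)).card := by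
    obtain ⟨v, hv⟩ := hSne
    refine ⟨{v}, Finset.singleton_subset_iff.2 hv, Finset.singleton_nonempty v,
      connIn_singleton G v, ?_⟩
    have hsd : S \ {v} = S.erase v := Finset.sdiff_singleton_eq_erase v S
    have hfil : (S \ {v}).filter (fun w => ∃ u ∈ ({v} : Finset V), G.Adj u w)
        = (S.filter (fun u => G.Adj v u)).erase v := by
      rw [hsd, ← Finset.filter_erase]
      apply Finset.filter_congr
      intro x _
      simp
    have hveq : ((S \ {v}).filter (fun w => ∃ u ∈ ({v} : Finset V), G.Adj u w)).card
        = dS G S v := by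
      rw [hfil, Finset.erase_eq_of_notMem (by simp)]
      rfl
    have hrem : eS G S = eS G (S \ {v}) + 2 * dS G S v := by
      rw [hsd]; exact eS_remove G hv
    have hsum : 2 ^ k * S.card ≤ eS G S := by
      rw [eS_eq_sum]
      calc 2 ^ k * S.card = ∑ _x ∈ S, 2 ^ k := by
            rw [Finset.sum_const, smul_eq_mul, mul_comm]
          _ ≤ ∑ x ∈ S, dS G S x := Finset.sum_le_sum hdeg
    have hc1 : (1 : ℕ) ≤ S.card := Finset.card_pos.2 ⟨v, hv⟩
    have hcv : ({v} : Finset V).card = 1 := Finset.card_singleton v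
    rw [hveq, hcv]
    have hSc : S.card - 1 + 1 = S.card := by omega
    rw [hSc]
    omega
  obtain ⟨U, hUmem, hUmax⟩ := Finset.exists_max_image
    ((S.powerset.filter (fun U => U.Nonempty ∧ ConnIn G U ∧
      2 ^ k * (S.card - U.card + 1) ≤
        eS G (S \ U) + 2 * ((S \ U).filter (fun w => ∃ u ∈ U, G.Adj u w)).card)))
    (fun U => U.card)
    (by
      obtain ⟨U, h1, h2, h3, h4⟩ := hfamne
      exact ⟨U, Finset.mem_filter.2 ⟨Finset.mem_powerset.2 h1, h2, h3, h4⟩⟩)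
  rw [Finset.mem_filter, Finset.mem_powerset] at hUmem
  obtain ⟨hUS, hUne, hUconn, hUcond⟩ := hUmem
  have hUcardlt : U.card < S.card := by
    obtain ⟨u0, hu0⟩ := hUne
    exact Finset.card_lt_card (Finset.ssubset_iff_of_subset hUS |>.2
      (by
        by_contra hcon
        push_neg at hcon
        -- S ⊆ U; then S = U; but then S \ U = ∅ and the condition fails
        have hSU : S = U := Finset.Subset.antisymm (fun x hx => hcon x hx) hUS
        have : S \ U = ∅ := by rw [hSU]; simp
        rw [this] at hUcond
        simp [eS] at hUcond))
  set N : Finset V := (S \ U).filter (fun w => ∃ u ∈ U, G.Adj u w) with hNdef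
  have hNS : N ⊆ S := fun x hx => (Finset.mem_sdiff.1 (Finset.mem_of_mem_filter x hx)).1
  have hNU : ∀ x ∈ N, x ∉ U := fun x hx =>
    (Finset.mem_sdiff.1 (Finset.mem_of_mem_filter x hx)).2
  have hnbr : ∀ x ∈ N, ∃ u ∈ U, G.Adj u x := fun x hx => (Finset.mem_filter.1 hx).2
  by_cases hN : N = ∅
  · -- Case A : recurse into S \ U
    have hsde : eS G (S \ U) > 0 := by
      rw [hN] at hUcond
      simp at hUcond
      have : 0 < 2 ^ k := Nat.pow_pos (by omega)
      nlinarith [hUcond]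
    have hS'ne : (S \ U).Nonempty := eS_pos_nonempty G hsde
    have hS'card : (S \ U).card ≤ n := by
      have := Finset.card_sdiff_of_subset hUS
      have := Finset.card_pos.2 hUne
      omega
    have hdeg' : ∀ v ∈ S \ U, 2 ^ k ≤ dS G (S \ U) v := by
      intro v hv
      have heq : (S \ U).filter (fun u => G.Adj v u) = S.filter (fun u => G.Adj v u) := by
        ext u
        simp only [Finset.mem_filter, Finset.mem_sdiff]
        constructor
        · rintro ⟨⟨h1, _⟩, h2⟩; exact ⟨h1, h2⟩
        · rintro ⟨h1, h2⟩
          refine ⟨⟨h1, ?_⟩, h2⟩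
          intro huU
          have : v ∈ N := Finset.mem_filter.2 ⟨hv, ⟨u, huU, h2.symm⟩⟩
          rw [hN] at this
          exact absurd this (Finset.notMem_empty v)
      unfold dS
      rw [heq]
      exact hdeg v (Finset.mem_sdiff.1 hv).1
    exact topMinorOn_mono (by exact_mod_cast Finset.sdiff_subset (s := S) (t := U))
      (IHn (S \ U) hS'card hS'ne hdeg')
  · -- Case B
    have hNne : N.Nonempty := Finset.nonempty_iff_ne_empty.2 hN
    -- minimum degree inside N
    have mindegN : ∀ w ∈ N, 2 ^ (k - 1) ≤ dS G N w := by
      intro w hwN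
      have hwSU : w ∈ S \ U := Finset.mem_of_mem_filter w hwN
      have hwS : w ∈ S := (Finset.mem_sdiff.1 hwSU).1
      have hwU : w ∉ U := (Finset.mem_sdiff.1 hwSU).2
      obtain ⟨u0, hu0U, hu0adj⟩ := hnbr w hwN
      have hU'conn : ConnIn G (insert w U) := connIn_insert G hUconn hu0U hu0adj.symm
      have hU'sub : insert w U ⊆ S := Finset.insert_subset hwS hUS
      have hU'card : (insert w U).card = U.card + 1 := Finset.card_insert_of_notMem hwU
      -- maximality: the condition fails for U' = insert w U
      have hU'cond : ¬ (2 ^ k * (S.card - (insert w U).card + 1) ≤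
          eS G (S \ insert w U) +
            2 * ((S \ insert w U).filter (fun x => ∃ u ∈ insert w U, G.Adj u x)).card) := by
        intro hc
        have hmem : insert w U ∈ S.powerset.filter (fun U => U.Nonempty ∧ ConnIn G U ∧
            2 ^ k * (S.card - U.card + 1) ≤
              eS G (S \ U) + 2 * ((S \ U).filter (fun x => ∃ u ∈ U, G.Adj u x)).card) :=
          Finset.mem_filter.2 ⟨Finset.mem_powerset.2 hU'sub, Finset.insert_nonempty w U,
            hU'conn, hc⟩
        have := hUmax _ hmem
        omega
      -- arithmetic bookkeeping
      have hSU' : S \ insert w U = (S \ U).erase w := by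
        rw [Finset.sdiff_insert]
      set A : Finset V := (S \ U).filter (fun u => G.Adj w u) with hAdef
      have hrem : eS G (S \ U) = eS G (S \ insert w U) + 2 * A.card := by
        rw [hSU']
        exact eS_remove G hwSU
      set N' : Finset V := (S \ insert w U).filter (fun x => ∃ u ∈ insert w U, G.Adj u x)
        with hN'def
      set t : Finset V := N.filter (fun u => G.Adj w u) with htdef
      have hsub1 : N.erase w ⊆ N' := by
        intro x hx
        obtain ⟨hxw, hxN⟩ := Finset.mem_erase.1 hx
        have hxSU : x ∈ S \ U := Finset.mem_of_mem_filter x hxN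
        obtain ⟨u', hu'U, hu'adj⟩ := hnbr x hxN
        refine Finset.mem_filter.2 ⟨?_, ⟨u', Finset.mem_insert_of_mem hu'U, hu'adj⟩⟩
        rw [hSU']
        exact Finset.mem_erase.2 ⟨hxw, hxSU⟩
      have hsub2 : A \ N ⊆ N' := by
        intro x hx
        obtain ⟨hxA, hxN⟩ := Finset.mem_sdiff.1 hx
        obtain ⟨hxSU, hxadj⟩ := Finset.mem_filter.1 hxA
        refine Finset.mem_filter.2 ⟨?_, ⟨w, Finset.mem_insert_self w U, hxadj⟩⟩
        rw [hSU']
        exact Finset.mem_erase.2 ⟨fun hh => G.irrefl (hh ▸ hxadj), hxSU⟩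
      have hdisjEA : Disjoint (N.erase w) (A \ N) := by
        refine Finset.disjoint_left.2 ?_
        intro x hx hx'
        exact (Finset.mem_sdiff.1 hx').2 (Finset.mem_of_mem_erase hx)
      have hcardun : (N.erase w).card + (A \ N).card ≤ N'.card := by
        rw [← Finset.card_union_of_disjoint hdisjEA]
        exact Finset.card_le_card (Finset.union_subset hsub1 hsub2)
      have hAint : A ∩ N = t := by
        ext x
        simp only [htdef, hAdef, Finset.mem_inter, Finset.mem_filter]
        constructor
        · rintro ⟨⟨_, h2⟩, h3⟩; exact ⟨h3, h2⟩
        · rintro ⟨h1, h2⟩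
          exact ⟨⟨Finset.mem_of_mem_filter x h1, h2⟩, h1⟩
      have hAcards : (A \ N).card + t.card = A.card := by
        rw [← hAint]
        exact Finset.card_sdiff_add_card_inter A N
      have hNerase : (N.erase w).card + 1 = N.card := by
        rw [Finset.card_erase_of_mem hwN]
        have := Finset.card_pos.2 ⟨w, hwN⟩
        omega
      -- the goal is about dS G N w = t.card
      show 2 ^ (k - 1) ≤ t.card
      rw [hU'card] at hU'cond
      have hX2 : S.card - (U.card + 1) + 1 = S.card - U.card := by omega
      rw [hX2] at hU'cond
      have hmul : 2 ^ k * (S.card - U.card + 1) = 2 ^ k * (S.card - U.card) + 2 ^ k := by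
        ring
      rw [hmul] at hUcond
      omega
    -- split on j
    rcases Nat.lt_or_ge j 2 with hj2 | hj2
    · -- j = 1
      have hj1 : j = 1 := by omega
      subst hj1
      have hm1 : 1 ≤ m := hjm
      have hmodel : IsTopMinorOn (⊤ : SimpleGraph (Fin m)) G (↑N : Set V) := by
        rcases Nat.lt_or_ge m 2 with hm2 | hm2
        · -- m = 1
          have : m = 1 := by omega
          subst this
          obtain ⟨x, hx⟩ := hNne
          exact topMinorOn_single (Finset.mem_coe.2 hx)
        · -- m ≥ 2 : use the induction hypothesis with (m-1, m-1)
          have hmm : m - 1 + 1 = m := by omega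
          have hkeq : (m - 1).choose 2 + (m - 1) = k - 1 := by
            have h2 : m.choose 2 = (m-1).choose 2 + (m-1) := by
              have h3 : (m - 1 + 1).choose 2 = (m - 1).choose 1 + (m - 1).choose 2 :=
                Nat.choose_succ_succ (m - 1) 1
              rw [hmm] at h3
              have h4 : (m - 1).choose 1 = m - 1 := Nat.choose_one_right _
              omega
            omega
          have hmodel' := IHk (k - 1) (by omega) (m - 1) (m - 1) (by omega) le_rfl hkeq
            N hNne mindegN
          refine topMinorOn_pullback (fun i : Fin m => Fin.cast hmm.symm i) ?_ ?_ hmodel'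
          · intro a b hab
            exact Fin.ext (by simpa using congrArg Fin.val hab)
          · intro a b hab
            refine ⟨fun hh => (SimpleGraph.top_adj a b).1 hab (Fin.ext (by
              simpa using congrArg Fin.val hh)), ?_, ?_⟩
            · intro _
              have := b.isLt
              simp only [Fin.coe_cast]
              omega
            · intro _
              have := a.isLt
              simp only [Fin.coe_cast]
              omega
      exact step_vertex hm1 hUS hNS hNU hnbr hmodel
    · -- j ≥ 2
      have hmodel := IHk (k - 1) (by omega) m (j - 1) (by omega) (by omega)
        (by omega) N hNne mindegN
      exact step_extend hj2 hjm hUS hNS hNU hUconn hnbr hmodel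

end Statement5Main
section Statement5Final

/-- If `H` has a subsingleton vertex type and `V` is nonempty, `H` is a topological minor. -/
lemma topMinor_of_subsingleton {W' : Type} [Subsingleton W'] {H : SimpleGraph W'}
    {V : Type} {G : SimpleGraph V} (hV : Nonempty V) : IsTopMinor H G := by
  obtain ⟨v⟩ := hV
  exact topMinorOn_single (Set.mem_univ v)

lemma topMinor_of_Kpart {W' : Type} [Fintype W'] (H : SimpleGraph W')
    {V : Type} {G : SimpleGraph V} (h2 : 2 ≤ Fintype.card W')
    (hmod : IsTopMinorOn (Kpart (Fintype.card W' - 1) (Fintype.card W' - 1)) G Set.univ) :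
    IsTopMinor H G := by
  have hcast : Fintype.card W' = (Fintype.card W' - 1) + 1 := by omega
  refine topMinorOn_pullback
    (fun w : W' => Fin.cast hcast (Fintype.equivFin W' w)) ?_ ?_ hmod
  · intro a b hab
    exact (Fintype.equivFin W').injective (Fin.ext (by simpa using congrArg Fin.val hab))
  · intro u v huv
    refine ⟨?_, ?_, ?_⟩
    · intro hh
      exact huv.ne ((Fintype.equivFin W').injective (Fin.ext (by
        simpa using congrArg Fin.val hh)))
    · intro _
      have := (Fin.cast hcast (Fintype.equivFin W' v)).isLt
      omega
    · intro _
      have := (Fin.cast hcast (Fintype.equivFin W' u)).isLt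
      omega

/-- Degeneracy: in an `H`-topological-minor-free graph every nonempty vertex set has a
vertex of small degree inside the set. -/
lemma exists_lowdeg {W' : Type} [Fintype W'] (H : SimpleGraph W') (h2 : 2 ≤ Fintype.card W')
    {V : Type} [DecidableEq V] (G : SimpleGraph V) (hfree : ¬ IsTopMinor H G)
    (S : Finset V) (hS : S.Nonempty) :
    ∃ v ∈ S, dS G S v <
      2 ^ ((Fintype.card W' - 1).choose 2 + (Fintype.card W' - 1)) := by
  by_contra hcon
  push_neg at hcon
  apply hfree
  apply topMinor_of_Kpart H h2
  exact topMinorOn_mono (Set.subset_univ (↑S : Set V))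
    (mainTK G _ (Fintype.card W' - 1) (Fintype.card W' - 1) (by omega) le_rfl rfl S hS hcon)

/-- Counting cliques in a graph all of whose subgraphs have a low-degree vertex. -/
lemma cliquecount {V : Type} [DecidableEq V] (G : SimpleGraph V) (D : ℕ)
    (hlow : ∀ S : Finset V, S.Nonempty → ∃ v ∈ S, dS G S v < D) :
    ∀ n (S : Finset V), S.card ≤ n →
      (S.powerset.filter (fun t : Finset V => t.Nonempty ∧ G.IsClique (↑t : Set V))).card
        ≤ 2 ^ D * S.card := by
  intro n
  induction n with
  | zero =>
    intro S hcard
    have : S = ∅ := Finset.card_eq_zero.1 (by omega)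
    subst this
    simp only [Finset.powerset_empty, Finset.card_empty, Nat.mul_zero, Nat.le_zero,
      Finset.card_eq_zero, Finset.filter_eq_empty_iff]
    rintro t ht ⟨hne, _⟩
    rw [Finset.mem_singleton] at ht
    subst ht
    exact Finset.not_nonempty_empty hne
  | succ n IH =>
    intro S hcard
    rcases S.eq_empty_or_nonempty with rfl | hSne
    · simp only [Finset.powerset_empty, Finset.card_empty, Nat.mul_zero, Nat.le_zero,
        Finset.card_eq_zero, Finset.filter_eq_empty_iff]
      rintro t ht ⟨hne, _⟩
      rw [Finset.mem_singleton] at ht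
      subst ht
      exact Finset.not_nonempty_empty hne
    obtain ⟨v, hvS, hvdeg⟩ := hlow S hSne
    have hc1 : 1 ≤ S.card := Finset.card_pos.2 hSne
    set C : Finset (Finset V) :=
      S.powerset.filter (fun t : Finset V => t.Nonempty ∧ G.IsClique (↑t : Set V)) with hC
    have hsplit : (C.filter (fun t => v ∈ t)).card + (C.filter (fun t => ¬ v ∈ t)).card
        = C.card := Finset.card_filter_add_card_filter_not _
    -- cliques not containing v
    have h0 : (C.filter (fun t => ¬ v ∈ t)).card ≤ 2 ^ D * (S.card - 1) := by
      have hsub : C.filter (fun t => ¬ v ∈ t) ⊆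
          (S.erase v).powerset.filter
            (fun t : Finset V => t.Nonempty ∧ G.IsClique (↑t : Set V)) := by
        intro t ht
        obtain ⟨htC, htv⟩ := Finset.mem_filter.1 ht
        obtain ⟨htS, htprops⟩ := Finset.mem_filter.1 htC
        refine Finset.mem_filter.2 ⟨Finset.mem_powerset.2 ?_, htprops⟩
        exact Finset.subset_erase.2 ⟨Finset.mem_powerset.1 htS, htv⟩
      calc (C.filter (fun t => ¬ v ∈ t)).card
          ≤ ((S.erase v).powerset.filter
              (fun t : Finset V => t.Nonempty ∧ G.IsClique (↑t : Set V))).card :=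
            Finset.card_le_card hsub
        _ ≤ 2 ^ D * (S.erase v).card := IH _ (by
            rw [Finset.card_erase_of_mem hvS]; omega)
        _ = 2 ^ D * (S.card - 1) := by rw [Finset.card_erase_of_mem hvS]
    -- cliques containing v
    have h1 : (C.filter (fun t => v ∈ t)).card ≤ 2 ^ D := by
      set Nv : Finset V := S.filter (fun u => G.Adj v u) with hNv
      have hmaps : ∀ t ∈ C.filter (fun t => v ∈ t), t.erase v ∈ Nv.powerset := by
        intro t ht
        obtain ⟨htC, htv⟩ := Finset.mem_filter.1 ht
        obtain ⟨htS, _, htcl⟩ := Finset.mem_filter.1 htC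
        refine Finset.mem_powerset.2 ?_
        intro x hx
        obtain ⟨hxv, hxt⟩ := Finset.mem_erase.1 hx
        refine Finset.mem_filter.2 ⟨Finset.mem_powerset.1 htS hxt, ?_⟩
        exact htcl (Finset.mem_coe.2 htv) (Finset.mem_coe.2 hxt) (Ne.symm hxv)
      have hinj : ∀ t1 ∈ C.filter (fun t => v ∈ t), ∀ t2 ∈ C.filter (fun t => v ∈ t),
          t1.erase v = t2.erase v → t1 = t2 := by
        intro t1 ht1 t2 ht2 heq
        have hv1 : v ∈ t1 := (Finset.mem_filter.1 ht1).2
        have hv2 : v ∈ t2 := (Finset.mem_filter.1 ht2).2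
        rw [← Finset.insert_erase hv1, ← Finset.insert_erase hv2, heq]
      calc (C.filter (fun t => v ∈ t)).card ≤ Nv.powerset.card :=
            Finset.card_le_card_of_injOn _ hmaps hinj
        _ = 2 ^ Nv.card := Finset.card_powerset Nv
        _ ≤ 2 ^ D := Nat.pow_le_pow_right (by omega) (le_of_lt hvdeg)
    have hfin : 2 ^ D * S.card = 2 ^ D * (S.card - 1) + 2 ^ D := by
      conv_lhs => rw [show S.card = (S.card - 1) + 1 by omega]
      ring
    omega

end Statement5Final

/-- `H`-topological-minor-free graphs contain a linear number of cliques. -/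
theorem statement5 {W : Type} [Fintype W] (H : SimpleGraph W) :
    ∃ c : ℕ, ∀ (V : Type) [Fintype V] (G : SimpleGraph V),
      ¬ IsTopMinor H G →
      {s : Finset V | s.Nonempty ∧ G.IsClique (↑s : Set V)}.ncard ≤ c * Fintype.card V := by
  classical
  by_cases hW : Fintype.card W ≤ 1
  · -- degenerate case : W subsingleton
    refine ⟨1, ?_⟩
    intro V _ G hfree
    cases isEmpty_or_nonempty V with
    | inl hVempty =>
      have : {s : Finset V | s.Nonempty ∧ G.IsClique (↑s : Set V)} = ∅ := by
        ext s
        simp only [Set.mem_setOf_eq, Set.mem_empty_iff_false, iff_false]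
        rintro ⟨⟨x, _⟩, _⟩
        exact hVempty.elim x
      rw [this, Set.ncard_empty]
      omega
    | inr hVne =>
      exfalso
      have : Subsingleton W := by
        rw [← Fintype.card_le_one_iff_subsingleton]
        omega
      exact hfree (topMinor_of_subsingleton hVne)
  · have h2 : 2 ≤ Fintype.card W := by omega
    set D : ℕ := 2 ^ ((Fintype.card W - 1).choose 2 + (Fintype.card W - 1)) with hD
    refine ⟨2 ^ D, ?_⟩
    intro V _ G hfree
    letI : DecidableEq V := Classical.decEq V
    have hlow : ∀ S : Finset V, S.Nonempty → ∃ v ∈ S, dS G S v < D :=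
      fun S hS => exists_lowdeg H h2 G hfree S hS
    have hcount := cliquecount G D hlow (Finset.univ.card) Finset.univ le_rfl
    have hsetid : {s : Finset V | s.Nonempty ∧ G.IsClique (↑s : Set V)}
        = ↑(Finset.univ.powerset.filter
            (fun t : Finset V => t.Nonempty ∧ G.IsClique (↑t : Set V))) := by
      ext s
      simp [Finset.mem_filter]
    rw [hsetid, Set.ncard_coe_finset]
    calc (Finset.univ.powerset.filter
          (fun t : Finset V => t.Nonempty ∧ G.IsClique (↑t : Set V))).card
        ≤ 2 ^ D * Finset.univ.card := hcount
      _ = 2 ^ D * Fintype.card V := by rw [Finset.card_univ]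

end Paper
end

section
/- Let G be a finite simple graph and let A ⊆ E(H(G)) be a well-linked set of hyperedges of the support hypergraph H(G). Then for every two vertices u, v ∈ bd(A) there exists a path from u to v in G all of whose edges correspond to hyperedges in A and all of whose internal vertices lie in int(A). -/
open scoped Classical

namespace Paper

variable {V : Type} {E : Type}

/-- outside paths from well-linked sets in the support hypergraph. -/
theorem statement6 {V E : Type} [Fintype V] [Fintype E]
    (G : SimpleGraph V) (F : E → Finset V) (hF : IsSupport G F)
    (A : Finset E) (hA : WellLinkedIn F Finset.univ A)
    (u v : V) (hu : u ∈ bdIn F Finset.univ A) (hv : v ∈ bdIn F Finset.univ A) :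
    ∃ p : G.Walk u v, p.IsPath ∧
      (∀ d ∈ p.edges, ∃ a ∈ A, ∀ x : V, x ∈ F a ↔ x ∈ d) ∧
      (∀ w ∈ p.support, w ≠ u → w ≠ v → w ∈ intIn F Finset.univ A) := by
  classical
  by_contra hcon
  -- the set of vertices reachable from `u` by good paths
  set R : Set V := {x | ∃ p : G.Walk u x, p.IsPath ∧
      (∀ d ∈ p.edges, ∃ a ∈ A, ∀ y : V, y ∈ F a ↔ y ∈ d) ∧
      (∀ w ∈ p.support, w ≠ u → w ≠ x → w ∈ intIn F Finset.univ A)} with hR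
  have huR : u ∈ R := by
    refine ⟨SimpleGraph.Walk.nil, SimpleGraph.Walk.IsPath.nil, by simp, ?_⟩
    intro w hw hwu _
    simp only [SimpleGraph.Walk.support_nil, List.mem_singleton] at hw
    exact absurd hw hwu
  have hvR : v ∉ R := fun ⟨p, h1, h2, h3⟩ => hcon ⟨p, h1, h2, h3⟩
  -- one-step closure of R
  have closure : ∀ x, x ∈ R → (x = u ∨ x ∈ intIn F Finset.univ A) →
      ∀ y, G.Adj x y →
      (∃ a ∈ A, ∀ z : V, z ∈ F a ↔ z ∈ (s(x, y) : Sym2 V)) → y ∈ R := by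
    rintro x ⟨p, hp, he, hs⟩ hx y hadj ha
    by_cases hy : y ∈ p.support
    · refine ⟨p.takeUntil y hy, hp.takeUntil hy, ?_, ?_⟩
      · intro d hd
        exact he d (SimpleGraph.Walk.edges_takeUntil_subset _ _ hd)
      · intro w hw hwu hwy
        by_cases hwx : w = x
        · rcases hx with h | h
          · exact absurd (hwx.trans h) hwu
          · rwa [hwx]
        · exact hs w (SimpleGraph.Walk.support_takeUntil_subset _ _ hw) hwu hwx
    · have hip : (p.concat hadj).IsPath := by
        rw [← SimpleGraph.Walk.isPath_reverse_iff, SimpleGraph.Walk.reverse_concat,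
          SimpleGraph.Walk.cons_isPath_iff]
        exact ⟨hp.reverse, by simpa using hy⟩
      refine ⟨p.concat hadj, hip, ?_, ?_⟩
      · intro d hd
        rw [SimpleGraph.Walk.edges_concat, List.concat_eq_append, List.mem_append,
          List.mem_singleton] at hd
        rcases hd with hd | hd
        · exact he d hd
        · rw [hd]; exact ha
      · intro w hw hwu hwy
        rw [SimpleGraph.Walk.support_concat, List.mem_append,
          List.mem_singleton] at hw
        rcases hw with hw | hw
        · by_cases hwx : w = x
          · rcases hx with h | h
            · exact absurd (hwx.trans h) hwu
            · rwa [hwx]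
          · exact hs w hw hwu hwx
        · exact absurd hw hwy
  -- closure along a hyperedge
  have step : ∀ a ∈ A, ∀ x ∈ F a, x ∈ R → (x = u ∨ x ∈ intIn F Finset.univ A) →
      ∀ y ∈ F a, y ∈ R := by
    intro a haA x hxa hxR hx y hya
    by_cases hxy : y = x
    · rwa [hxy]
    rcases hF.1 a with ⟨w, hw⟩ | ⟨b, c, hbc, hw⟩
    · rw [hw, Finset.mem_singleton] at hxa hya
      exact absurd (hya.trans hxa.symm) hxy
    · rw [hw, Finset.mem_insert, Finset.mem_singleton] at hxa hya
      have hbc' := hbc.ne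
      rcases hxa with rfl | rfl <;> rcases hya with rfl | rfl
      · exact absurd rfl hxy
      · refine closure x hxR hx y hbc ⟨a, haA, ?_⟩
        intro z; rw [hw]; simp
      · refine closure x hxR hx y hbc.symm ⟨a, haA, ?_⟩
        intro z; rw [hw]; simp; tauto
      · exact absurd rfl hxy
  -- the partition
  set A1 : Finset E := A.filter (fun a => ∀ x ∈ F a, x ∈ R) with hA1
  set A2 : Finset E := A \ A1 with hA2
  have hA1sub : A1 ⊆ A := Finset.filter_subset _ _
  have hunion : A1 ∪ A2 = A := Finset.union_sdiff_of_subset hA1sub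
  have hdisj : A1 ∩ A2 = ∅ := by
    rw [hA2]; exact Finset.inter_sdiff_self _ _
  -- every hyperedge of A containing u is in A1
  have huA1 : ∀ a ∈ A, u ∈ F a → a ∈ A1 := by
    intro a haA hua
    rw [hA1, Finset.mem_filter]
    exact ⟨haA, fun x hx => step a haA u hua huR (Or.inl rfl) x hx⟩
  have hVsA1 : ∀ x ∈ Vs F A1, x ∈ R := by
    intro x hx
    rcases Finset.mem_biUnion.1 hx with ⟨a, haA1, hxa⟩
    exact (Finset.mem_filter.1 haA1).2 x hxa
  -- boundary of A1
  have hbd1 : bdIn F Finset.univ A1 ⊆ bdIn F Finset.univ A := by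
    intro x hx
    rcases Finset.mem_inter.1 hx with ⟨hx1, hx2⟩
    have hxR : x ∈ R := hVsA1 x hx1
    have hxA : x ∈ Vs F A := by
      rcases Finset.mem_biUnion.1 hx1 with ⟨a, haA1, hxa⟩
      exact Finset.mem_biUnion.2 ⟨a, hA1sub haA1, hxa⟩
    by_contra hxbd
    have hxI : x ∈ intIn F Finset.univ A := Finset.mem_sdiff.2 ⟨hxA, hxbd⟩
    rcases Finset.mem_biUnion.1 hx2 with ⟨e, he, hxe⟩
    rw [Finset.mem_sdiff] at he
    by_cases heA : e ∈ A
    · have heA1 : e ∈ A1 := by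
        rw [hA1, Finset.mem_filter]
        exact ⟨heA, fun y hy => step e heA x hxe hxR (Or.inr hxI) y hy⟩
      exact he.2 heA1
    · exact hxbd (Finset.mem_inter.2 ⟨hxA, Finset.mem_biUnion.2
        ⟨e, Finset.mem_sdiff.2 ⟨Finset.mem_univ e, heA⟩, hxe⟩⟩)
  have hv1 : v ∉ bdIn F Finset.univ A1 := fun h =>
    hvR (hVsA1 v (Finset.mem_inter.1 h).1)
  -- boundary of A2
  have hbd2 : bdIn F Finset.univ A2 ⊆ bdIn F Finset.univ A := by
    intro x hx
    rcases Finset.mem_inter.1 hx with ⟨hx1, hx2⟩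
    rcases Finset.mem_biUnion.1 hx1 with ⟨a, haA2, hxa⟩
    rw [hA2, Finset.mem_sdiff] at haA2
    have hxA : x ∈ Vs F A := Finset.mem_biUnion.2 ⟨a, haA2.1, hxa⟩
    by_contra hxbd
    have hxI : x ∈ intIn F Finset.univ A := Finset.mem_sdiff.2 ⟨hxA, hxbd⟩
    rcases Finset.mem_biUnion.1 hx2 with ⟨e, he, hxe⟩
    rw [Finset.mem_sdiff] at he
    by_cases heA : e ∈ A
    · -- then e ∈ A1, so x ∈ R, so a ∈ A1, contradiction
      have heA1 : e ∈ A1 := by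
        by_contra h
        exact he.2 (by rw [hA2, Finset.mem_sdiff]; exact ⟨heA, h⟩)
      have hxR : x ∈ R := (Finset.mem_filter.1 heA1).2 x hxe
      have : a ∈ A1 := by
        rw [hA1, Finset.mem_filter]
        exact ⟨haA2.1, fun y hy => step a haA2.1 x hxa hxR (Or.inr hxI) y hy⟩
      exact haA2.2 this
    · exact hxbd (Finset.mem_inter.2 ⟨hxA, Finset.mem_biUnion.2
        ⟨e, Finset.mem_sdiff.2 ⟨Finset.mem_univ e, heA⟩, hxe⟩⟩)
  have hu2 : u ∉ bdIn F Finset.univ A2 := by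
    intro h
    rcases Finset.mem_biUnion.1 (Finset.mem_inter.1 h).1 with ⟨a, haA2, hua⟩
    rw [hA2, Finset.mem_sdiff] at haA2
    exact haA2.2 (huA1 a haA2.1 hua)
  -- cardinality contradiction
  have hc1 : lamIn F Finset.univ A1 < lamIn F Finset.univ A :=
    Finset.card_lt_card ((Finset.ssubset_iff_of_subset hbd1).2 ⟨v, hv, hv1⟩)
  have hc2 : lamIn F Finset.univ A2 < lamIn F Finset.univ A :=
    Finset.card_lt_card ((Finset.ssubset_iff_of_subset hbd2).2 ⟨u, hu, hu2⟩)
  rcases hA A1 A2 hunion hdisj with h | h <;> omega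

end Paper
end

section
/- Let Π be a parameterized graph problem and let G1, G2 be boundaried graphs that are non-monotone for Π and satisfy G1 ≡_Π G2. Then there is exactly one transposition constant from G1 to G2, i.e., exactly one Δ ∈ ℤ such that for every boundaried graph F and every k ∈ ℤ, (F ⊕ G1, k) ∈ Π if and only if (F ⊕ G2, k + Δ) ∈ Π. -/
open scoped Classical

namespace Paper

/-- A finite simple graph on the vertex universe `ℕ ⊕ ℕ` (used for glued graphs). -/
structure PGraph where
  verts : Finset (ℕ ⊕ ℕ)
  Adj : (ℕ ⊕ ℕ) → (ℕ ⊕ ℕ) → Prop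
  symm : ∀ u v, Adj u v → Adj v u
  loopless : ∀ u, ¬ Adj u u
  supp : ∀ u v, Adj u v → u ∈ verts ∧ v ∈ verts

/-- A boundaried graph: a finite simple graph on the vertex universe `ℕ`,
together with a boundary set and an injective labeling of the boundary by
positive integers. -/
structure BGraph where
  verts : Finset ℕ
  Adj : ℕ → ℕ → Prop
  symm : ∀ u v, Adj u v → Adj v u
  loopless : ∀ u, ¬ Adj u u
  supp : ∀ u v, Adj u v → u ∈ verts ∧ v ∈ verts
  bnd : Finset ℕ
  bnd_sub : bnd ⊆ verts
  lab : ℕ → ℕ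
  lab_inj : Set.InjOn lab ↑bnd
  lab_pos : ∀ b ∈ bnd, 1 ≤ lab b

/-- The label set of a boundaried graph. -/
noncomputable def BGraph.labels (X : BGraph) : Finset ℕ := X.bnd.image X.lab

/-- Where a vertex `x` of `X` goes in the glued graph `glue X Y`: if `x` is a
boundary vertex of `X` whose label is also a label of `Y`, it is identified
with the boundary vertex of `Y` carrying the same label; otherwise it is kept
(on the left side of the disjoint union). -/
noncomputable def glueMap (X Y : BGraph) (x : ℕ) : ℕ ⊕ ℕ :=
  if h : x ∈ X.bnd ∧ ∃ y ∈ Y.bnd, Y.lab y = X.lab x then Sum.inr h.2.choose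
  else Sum.inl x

/-- The glued graph `X ⊕ Y`: the disjoint union of `X` and `Y` in which, for
each common label, the boundary vertices of `X` and `Y` carrying that label are
identified. -/
noncomputable def glue (X Y : BGraph) : PGraph where
  verts := X.verts.image (glueMap X Y) ∪ Y.verts.image Sum.inr
  Adj u v :=
    (u ≠ v ∧ ∃ a b, X.Adj a b ∧ glueMap X Y a = u ∧ glueMap X Y b = v) ∨
    (∃ a b, Y.Adj a b ∧ Sum.inr a = u ∧ Sum.inr b = v)
  symm := by
    rintro u v (⟨hne, a, b, hab, ha, hb⟩ | ⟨a, b, hab, ha, hb⟩)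
    · exact Or.inl ⟨hne.symm, b, a, X.symm a b hab, hb, ha⟩
    · exact Or.inr ⟨b, a, Y.symm a b hab, hb, ha⟩
  loopless := by
    rintro u (⟨hne, _⟩ | ⟨a, b, hab, ha, hb⟩)
    · exact hne rfl
    · have hba : a = b := Sum.inr_injective (ha.trans hb.symm)
      exact Y.loopless b (hba ▸ hab)
  supp := by
    rintro u v (⟨hne, a, b, hab, rfl, rfl⟩ | ⟨a, b, hab, rfl, rfl⟩)
    · obtain ⟨ha, hb⟩ := X.supp a b hab
      exact ⟨Finset.mem_union_left _ (Finset.mem_image_of_mem _ ha),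
             Finset.mem_union_left _ (Finset.mem_image_of_mem _ hb)⟩
    · obtain ⟨ha, hb⟩ := Y.supp a b hab
      exact ⟨Finset.mem_union_right _ (Finset.mem_image_of_mem _ ha),
             Finset.mem_union_right _ (Finset.mem_image_of_mem _ hb)⟩

/-- A parameterized graph problem: membership for negative parameter values is
uniform. -/
def ParamProblem (P : PGraph → ℤ → Prop) : Prop :=
  (∀ G k, k < 0 → P G k) ∨ (∀ G k, k < 0 → ¬ P G k)

/-- `Δ` is a transposition constant from `X` to `Y` for the problem `P`. -/
def TransConst (P : PGraph → ℤ → Prop) (X Y : BGraph) (Δ : ℤ) : Prop :=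
  ∀ (F : BGraph) (k : ℤ), P (glue F X) k ↔ P (glue F Y) (k + Δ)

/-- A boundaried graph is monotone for `P`. -/
def MonotonePb (P : PGraph → ℤ → Prop) (X : BGraph) : Prop :=
  (∀ (F : BGraph) (k : ℤ), P (glue F X) k) ∨ (∀ (F : BGraph) (k : ℤ), ¬ P (glue F X) k)

/-- The equivalence `X ≡_Π Y`. -/
def EquivPb (P : PGraph → ℤ → Prop) (X Y : BGraph) : Prop :=
  X.labels = Y.labels ∧ ∃ Δ : ℤ, TransConst P X Y Δ

/-- The equivalence `X ≡_𝒢 Y` for a class `𝒢` of graphs. -/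
def EquivCls (𝒢 : Set PGraph) (X Y : BGraph) : Prop :=
  X.labels = Y.labels ∧ ∀ F : BGraph, glue F X ∈ 𝒢 ↔ glue F Y ∈ 𝒢


/-- uniqueness of the transposition constant between non-monotone
equivalent boundaried graphs. -/
theorem statement9 (P : PGraph → ℤ → Prop) (hP : ParamProblem P)
    (G1 G2 : BGraph) (h1 : ¬ MonotonePb P G1) (h2 : ¬ MonotonePb P G2)
    (heq : EquivPb P G1 G2) :
    ∃! Δ : ℤ, TransConst P G1 G2 Δ := by
  obtain ⟨_, Δ, hΔ⟩ := heq
  refine ⟨Δ, hΔ, ?_⟩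
  intro Δ' hΔ'
  by_contra hne
  -- periodicity of `P (glue F G2)` with period `Δ - Δ'`
  have hper : ∀ (F : BGraph) (m : ℤ),
      P (glue F G2) m ↔ P (glue F G2) (m + (Δ - Δ')) := by
    intro F m
    have ha := hΔ' F (m - Δ')
    have hb := hΔ F (m - Δ')
    rw [sub_add_cancel] at ha
    have : m - Δ' + Δ = m + (Δ - Δ') := by ring
    rw [this] at hb
    exact ha.symm.trans hb
  -- a negative period
  obtain ⟨e, he, hpe⟩ : ∃ e : ℤ, e < 0 ∧
      ∀ (F : BGraph) (m : ℤ), P (glue F G2) m ↔ P (glue F G2) (m + e) := by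
    rcases lt_trichotomy (Δ - Δ') 0 with h | h | h
    · exact ⟨Δ - Δ', h, hper⟩
    · exact absurd (by linarith : Δ' = Δ) hne
    · refine ⟨Δ' - Δ, by linarith, fun F m => ?_⟩
      have := hper F (m + (Δ' - Δ))
      have h2 : m + (Δ' - Δ) + (Δ - Δ') = m := by ring
      rw [h2] at this
      exact this.symm
  -- iterate the period
  have hiter : ∀ (F : BGraph) (m : ℤ) (n : ℕ),
      P (glue F G2) m ↔ P (glue F G2) (m + n * e) := by
    intro F m n
    induction n with
    | zero => simp
    | succ n ih =>
      refine ih.trans ((hpe F (m + n * e)).trans ?_)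
      have : m + n * e + e = m + (n + 1 : ℕ) * e := by push_cast; ring
      rw [this]
  -- from any m, reach a negative parameter
  have hreach : ∀ (F : BGraph) (m : ℤ), ∃ m' : ℤ, m' < 0 ∧
      (P (glue F G2) m ↔ P (glue F G2) m') := by
    intro F m
    refine ⟨m + (m.toNat + 1) * e, ?_, hiter F m (m.toNat + 1)⟩
    have h1 : m ≤ (m.toNat : ℤ) := Int.self_le_toNat m
    have h2 : e ≤ -1 := by linarith
    have h3 : (0 : ℤ) ≤ (m.toNat : ℤ) + 1 := by positivity
    nlinarith
  -- G2 is monotone: contradiction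
  rcases hP with hP | hP
  · refine h2 (Or.inl fun F k => ?_)
    obtain ⟨m', hm', hiff⟩ := hreach F k
    exact hiff.mpr (hP _ _ hm')
  · refine h2 (Or.inr fun F k hk => ?_)
    obtain ⟨m', hm', hiff⟩ := hreach F k
    exact hP _ _ hm' (hiff.mp hk)

end Paper
end

section
/- Let 𝒢 be a class of finite graphs and let Π be a parameterized graph problem. Then every equivalence class C of the relation ≡_{Π,𝒢} on boundaried graphs contains a boundaried graph G0 such that for every G ∈ C there exists an integer Δ ≤ 0 that is a transposition constant from G to G0, i.e., for every boundaried graph F and every k ∈ ℤ, (F ⊕ G, k) ∈ Π if and only if (F ⊕ G0, k + Δ) ∈ Π. -/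
open scoped Classical

namespace Paper

/-- every equivalence class of `≡_{Π,𝒢}` has a progressive
representative. -/
theorem statement11 (P : PGraph → ℤ → Prop) (hP : ParamProblem P)
    (𝒢 : Set PGraph) (C : Set BGraph)
    (hC : ∃ X : BGraph, C = {Y | EquivPb P X Y ∧ EquivCls 𝒢 X Y}) :
    ∃ G0 ∈ C, ∀ G ∈ C, ∃ Δ : ℤ, Δ ≤ 0 ∧ TransConst P G G0 Δ := by
  obtain ⟨X, rfl⟩ := hC
  have hXmem : X ∈ {Y | EquivPb P X Y ∧ EquivCls 𝒢 X Y} := by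
    refine ⟨⟨rfl, 0, fun F k => by rw [add_zero]⟩, rfl, fun F => Iff.rfl⟩
  by_cases hmono : MonotonePb P X
  · refine ⟨X, hXmem, ?_⟩
    rintro G ⟨⟨-, Δ, hΔ⟩, -⟩
    refine ⟨0, le_refl 0, fun F k => ?_⟩
    rw [add_zero]
    rcases hmono with h | h
    · have hG : P (glue F G) k := by
        have h1 := (hΔ F (k - Δ)).mp (h F (k - Δ))
        have e : k - Δ + Δ = k := by ring
        rwa [e] at h1
      exact iff_of_true hG (h F k)
    · have hG : ¬ P (glue F G) k := by
        intro hk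
        have e : k - Δ + Δ = k := by ring
        have h1 : P (glue F G) (k - Δ + Δ) := by rwa [e]
        exact h F (k - Δ) ((hΔ F (k - Δ)).mpr h1)
      exact iff_of_false hG (h F k)
  · unfold MonotonePb at hmono
    push_neg at hmono
    obtain ⟨⟨F1, k1, h1⟩, ⟨F2, k2, h2⟩⟩ := hmono
    set S : ℤ → Prop := fun d =>
      ∃ G, (G ∈ {Y | EquivPb P X Y ∧ EquivCls 𝒢 X Y}) ∧ TransConst P X G d with hS
    have Hinh : ∃ d, S d := ⟨0, X, hXmem, fun F k => by rw [add_zero]⟩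
    have Hbdd : ∃ b, ∀ d, S d → b ≤ d := by
      rcases hP with hPa | hPb
      · refine ⟨-k1, ?_⟩
        rintro d ⟨G, -, hd⟩
        by_contra hlt
        push_neg at hlt
        have hneg : k1 + d < 0 := by linarith
        exact h1 ((hd F1 k1).mpr (hPa _ _ hneg))
      · refine ⟨-k2, ?_⟩
        rintro d ⟨G, -, hd⟩
        by_contra hlt
        push_neg at hlt
        have hneg : k2 + d < 0 := by linarith
        exact hPb _ _ hneg ((hd F2 k2).mp h2)
    obtain ⟨lb, ⟨G0, hG0mem, hG0⟩, hmin⟩ := Int.exists_least_of_bdd Hbdd Hinh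
    refine ⟨G0, hG0mem, ?_⟩
    rintro G hGmem
    obtain ⟨Δ, hΔ⟩ := hGmem.1.2
    have hle : lb ≤ Δ := hmin Δ ⟨G, hGmem, hΔ⟩
    refine ⟨lb - Δ, by linarith, fun F k => ?_⟩
    have hA : P (glue F G) k ↔ P (glue F X) (k - Δ) := by
      have h1 := hΔ F (k - Δ)
      have e : k - Δ + Δ = k := by ring
      rw [e] at h1
      exact h1.symm
    have hB := hG0 F (k - Δ)
    have e2 : k - Δ + lb = k + (lb - Δ) := by ring
    rw [e2] at hB
    exact hA.trans hB

end Paper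
end
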